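/- arXiv:1810.00074 — 6 statements merged into one kernel-verified Lean document; each statement's English description precedes it below -/
import Mathlib

section
/- If G is a connected claw-free cubic graph with G not isomorphic to K_4, then the vertex set V(G) can be partitioned into sets each of which induces a triangle or a diamond in G, and this partition is unique. -/
open SimpleGraph

variable {V : Type*}

/-- A graph is claw-free if it has no induced subgraph isomorphic to `K_{1,3}`:
there are no four vertices `v, a, b, c` with `v` adjacent to the pairwise distinct,
pairwise non-adjacent vertices `a, b, c`. -/
def IsClawFree (G : SimpleGraph V) : Prop :=
  ¬ ∃ v a b c : V, G.Adj v a ∧ G.Adj v b ∧ G.Adj v c ∧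
    a ≠ b ∧ a ≠ c ∧ b ≠ c ∧ ¬ G.Adj a b ∧ ¬ G.Adj a c ∧ ¬ G.Adj b c

/-- A graph is cubic if every vertex has degree three. -/
def IsCubic (G : SimpleGraph V) : Prop :=
  ∀ v : V, (G.neighborSet v).ncard = 3

/-- A graph (viewed as an edge set) is a matching if every vertex has at most one neighbour. -/
def IsMatchingGraph (M : SimpleGraph V) : Prop :=
  ∀ ⦃v w w' : V⦄, M.Adj v w → M.Adj v w' → w = w'

/-- A (nonempty) 2-regular subgraph: it has at least one edge, and every vertex incident
with an edge has exactly two neighbours. -/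
def IsTwoRegularGraph (O : SimpleGraph V) : Prop :=
  O.edgeSet.Nonempty ∧ ∀ v ∈ O.support, (O.neighborSet v).ncard = 2

/-- A good decomposition of `G`: the edge set of `G` is partitioned into the edge set of a
spanning tree `T`, a matching `M` (possibly empty), and the edge set of a 2-regular
subgraph `O`. -/
def IsGoodDecomposition (G T M O : SimpleGraph V) : Prop :=
  T ≤ G ∧ M ≤ G ∧ O ≤ G ∧
  T.IsTree ∧ IsMatchingGraph M ∧ IsTwoRegularGraph O ∧
  T.edgeSet ∪ M.edgeSet ∪ O.edgeSet = G.edgeSet ∧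
  Disjoint T.edgeSet M.edgeSet ∧ Disjoint T.edgeSet O.edgeSet ∧
  Disjoint M.edgeSet O.edgeSet

/-- The set `s` induces a triangle in `G`. -/
def IsTriangleSet (G : SimpleGraph V) (s : Set V) : Prop :=
  ∃ a b c : V, s = {a, b, c} ∧ G.Adj a b ∧ G.Adj a c ∧ G.Adj b c

/-- The set `s` induces a diamond (`K_4` minus one edge) in `G`. -/
def IsDiamondSet (G : SimpleGraph V) (s : Set V) : Prop :=
  ∃ a b c d : V, s = {a, b, c, d} ∧ a ≠ d ∧
    G.Adj a b ∧ G.Adj a c ∧ G.Adj b c ∧ G.Adj b d ∧ G.Adj c d ∧ ¬ G.Adj a d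

set_option linter.unusedSectionVars false

section Aux

variable [Fintype V] {G : SimpleGraph V}

lemma nbhd_eq (hcubic : IsCubic G) {u p q r : V}
    (hp : G.Adj u p) (hq : G.Adj u q) (hr : G.Adj u r)
    (hpq : p ≠ q) (hpr : p ≠ r) (hqr : q ≠ r) :
    G.neighborSet u = {p, q, r} := by
  have hsub : ({p, q, r} : Set V) ⊆ G.neighborSet u := by
    intro z hz
    simp only [Set.mem_insert_iff, Set.mem_singleton_iff] at hz
    rcases hz with rfl | rfl | rfl
    · exact hp
    · exact hq
    · exact hr
  have h3 : ({p, q, r} : Set V).ncard = 3 :=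
    Set.ncard_eq_three.mpr ⟨p, q, r, hpq, hpr, hqr, rfl⟩
  exact (Set.eq_of_subset_of_ncard_le hsub (by rw [hcubic u, h3])).symm

lemma adj_of_nbhd {u p q r w : V} (hN : G.neighborSet u = {p, q, r}) (hw : G.Adj u w) :
    w = p ∨ w = q ∨ w = r := by
  have : w ∈ G.neighborSet u := hw
  rw [hN] at this
  simpa using this

lemma tri_mem_structure {t : Set V} {u : V} (ht : IsTriangleSet G t) (hu : u ∈ t) :
    ∃ p q, t = {u, p, q} ∧ G.Adj u p ∧ G.Adj u q ∧ G.Adj p q := by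
  obtain ⟨a, b, c, rfl, hab, hac, hbc⟩ := ht
  simp only [Set.mem_insert_iff, Set.mem_singleton_iff] at hu
  rcases hu with rfl | rfl | rfl
  · exact ⟨b, c, rfl, hab, hac, hbc⟩
  · exact ⟨a, c, by ext z; simp; tauto, hab.symm, hbc, hac⟩
  · exact ⟨a, b, by ext z; simp; tauto, hac.symm, hbc.symm, hab⟩

lemma diamond_mem_structure {t : Set V} {u : V} (ht : IsDiamondSet G t) (hu : u ∈ t) :
    ∃ p q r w, t = {p, q, r, w} ∧ (u = p ∨ u = q ∨ u = r) ∧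
      G.Adj p q ∧ G.Adj p r ∧ G.Adj q r ∧ G.Adj w q ∧ G.Adj w r ∧ w ≠ p := by
  obtain ⟨a, b, c, d, rfl, had, hab, hac, hbc, hbd, hcd, hnad⟩ := ht
  simp only [Set.mem_insert_iff, Set.mem_singleton_iff] at hu
  rcases hu with rfl | rfl | rfl | rfl
  · exact ⟨_, _, _, _, rfl, Or.inl rfl, hab, hac, hbc, hbd.symm, hcd.symm, Ne.symm had⟩
  · exact ⟨_, _, _, _, rfl, Or.inr (Or.inl rfl), hab, hac, hbc, hbd.symm, hcd.symm, Ne.symm had⟩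
  · exact ⟨_, _, _, _, rfl, Or.inr (Or.inr rfl), hab, hac, hbc, hbd.symm, hcd.symm, Ne.symm had⟩
  · exact ⟨u, b, c, a, by ext z; simp; tauto, Or.inl rfl, hbd.symm, hcd.symm, hbc, hab, hac, had⟩

lemma tri_ncard {t : Set V} (ht : IsTriangleSet G t) : t.ncard = 3 := by
  obtain ⟨a, b, c, rfl, hab, hac, hbc⟩ := ht
  exact Set.ncard_eq_three.mpr ⟨a, b, c, hab.ne, hac.ne, hbc.ne, rfl⟩

lemma diamond_ncard {t : Set V} (ht : IsDiamondSet G t) : t.ncard = 4 := by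
  obtain ⟨a, b, c, d, rfl, had, hab, hac, hbc, hbd, hcd, hnad⟩ := ht
  rw [Set.ncard_insert_of_notMem (by simp [hab.ne, hac.ne, had]),
      Set.ncard_insert_of_notMem (by simp [hbc.ne, hbd.ne]),
      Set.ncard_insert_of_notMem (by simp [hcd.ne]), Set.ncard_singleton]

lemma tri_nonempty {t : Set V} (ht : IsTriangleSet G t) : t.Nonempty := by
  obtain ⟨a, b, c, rfl, -, -, -⟩ := ht
  exact ⟨a, by simp⟩

lemma diamond_nonempty {t : Set V} (ht : IsDiamondSet G t) : t.Nonempty := by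
  obtain ⟨a, b, c, d, rfl, -⟩ := ht
  exact ⟨a, by simp⟩

end Aux
/-- The key maximality property of a cluster `s`. -/
def MaxProp (G : SimpleGraph V) (s : Set V) : Prop :=
  (IsTriangleSet G s ∨ IsDiamondSet G s) ∧
  (∀ t, IsTriangleSet G t ∨ IsDiamondSet G t → (∃ u, u ∈ t ∧ u ∈ s) → t ⊆ s) ∧
  (∀ t, IsTriangleSet G t ∨ IsDiamondSet G t → t ⊆ s → t ≠ s →
    ∃ w, w ∈ s ∧ w ∉ t ∧ ∀ t', IsTriangleSet G t' ∨ IsDiamondSet G t' → w ∈ t' → t' ⊆ s →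
      ∃ z, z ∈ t' ∧ z ∈ t)

section Tri

variable [Fintype V] {G : SimpleGraph V}

lemma pair_eq (hcubic : IsCubic G) {v a b : V}
    (hva : G.Adj v a) (hvb : G.Adj v b) (hab : G.Adj a b)
    (h1 : ∀ w, G.Adj w v → G.Adj w a → w = b)
    (h2 : ∀ w, G.Adj w v → G.Adj w b → w = a) :
    ∀ q r, G.Adj v q → G.Adj v r → G.Adj q r → (q = a ∧ r = b) ∨ (q = b ∧ r = a) := by
  intro q r hvq hvr hqr
  by_cases hqa : q = a
  · subst hqa
    exact Or.inl ⟨rfl, h1 r hvr.symm hqr.symm⟩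
  by_cases hqb : q = b
  · subst hqb
    exact Or.inr ⟨rfl, h2 r hvr.symm hqr.symm⟩
  · exfalso
    have hN : G.neighborSet v = {a, b, q} :=
      nbhd_eq hcubic hva hvb hvq hab.ne (Ne.symm hqa) (Ne.symm hqb)
    rcases adj_of_nbhd hN hvr with rfl | rfl | rfl
    · exact hqb (h1 q hvq.symm hqr)
    · exact hqa (h2 q hvq.symm hqr)
    · exact G.irrefl hqr

lemma tri_eq (hcubic : IsCubic G) {v a b : V}
    (hva : G.Adj v a) (hvb : G.Adj v b) (hab : G.Adj a b)
    (h1 : ∀ w, G.Adj w v → G.Adj w a → w = b)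
    (h2 : ∀ w, G.Adj w v → G.Adj w b → w = a) :
    ∀ t, IsTriangleSet G t → v ∈ t → t = {v, a, b} := by
  intro t ht hvt
  obtain ⟨p, q, rfl, hup, huq, hpq⟩ := tri_mem_structure ht hvt
  rcases pair_eq hcubic hva hvb hab h1 h2 p q hup huq hpq with ⟨rfl, rfl⟩ | ⟨rfl, rfl⟩
  · rfl
  · ext z; simp; tauto

lemma tri_key (hcubic : IsCubic G) {v a b : V}
    (hva : G.Adj v a) (hvb : G.Adj v b) (hab : G.Adj a b)
    (h1 : ∀ w, G.Adj w v → G.Adj w a → w = b)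
    (h2 : ∀ w, G.Adj w v → G.Adj w b → w = a)
    (h3 : ∀ w, G.Adj w a → G.Adj w b → w = v) :
    MaxProp G {v, a, b} := by
  have hsTri : IsTriangleSet G {v, a, b} := ⟨v, a, b, rfl, hva, hvb, hab⟩
  -- any triangle meeting s equals s
  have tri_any : ∀ t, IsTriangleSet G t → (∃ u, u ∈ t ∧ u ∈ ({v, a, b} : Set V)) →
      t = {v, a, b} := by
    rintro t ht ⟨u, hut, hus⟩
    simp only [Set.mem_insert_iff, Set.mem_singleton_iff] at hus
    rcases hus with rfl | rfl | rfl
    · exact tri_eq hcubic hva hvb hab h1 h2 t ht hut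
    · have := tri_eq hcubic (v := u) (a := v) (b := b) hva.symm hab hvb
        (fun w hwa hwv => h1 w hwv hwa) h3 t ht hut
      rw [this]; ext z; simp; tauto
    · have := tri_eq hcubic (v := u) (a := v) (b := a) hvb.symm hab.symm hva
        (fun w hwb hwv => h2 w hwv hwb) (fun w hwb hwa => h3 w hwa hwb) t ht hut
      rw [this]; ext z; simp; tauto
  -- common neighbours of two vertices of s lie in s
  have common_in : ∀ q r w, q ∈ ({v, a, b} : Set V) → r ∈ ({v, a, b} : Set V) → q ≠ r →
      G.Adj w q → G.Adj w r → w ∈ ({v, a, b} : Set V) := by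
    intro q r w hq hr hqr hwq hwr
    simp only [Set.mem_insert_iff, Set.mem_singleton_iff] at hq hr ⊢
    rcases hq with rfl | rfl | rfl <;> rcases hr with rfl | rfl | rfl
    · exact absurd rfl hqr
    · exact Or.inr (Or.inr (h1 w hwq hwr))
    · exact Or.inr (Or.inl (h2 w hwq hwr))
    · exact Or.inr (Or.inr (h1 w hwr hwq))
    · exact absurd rfl hqr
    · exact Or.inl (h3 w hwq hwr)
    · exact Or.inr (Or.inl (h2 w hwr hwq))
    · exact Or.inl (h3 w hwr hwq)
    · exact absurd rfl hqr
  refine ⟨Or.inl hsTri, ?_, ?_⟩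
  · rintro t (ht | ht) hmeet
    · rw [tri_any t ht hmeet]
    · exfalso
      obtain ⟨u, hut, hus⟩ := hmeet
      obtain ⟨p, q, r, w, hteq, hupos, hpq, hpr, hqr, hwq, hwr, hwp⟩ :=
        diamond_mem_structure ht hut
      have hT0 : IsTriangleSet G {p, q, r} := ⟨p, q, r, rfl, hpq, hpr, hqr⟩
      have humem : u ∈ ({p, q, r} : Set V) := by
        rcases hupos with rfl | rfl | rfl <;> simp
      have hT0eq : ({p, q, r} : Set V) = {v, a, b} := tri_any _ hT0 ⟨u, humem, hus⟩
      have hqmem : q ∈ ({v, a, b} : Set V) := by rw [← hT0eq]; simp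
      have hrmem : r ∈ ({v, a, b} : Set V) := by rw [← hT0eq]; simp
      have hws : w ∈ ({v, a, b} : Set V) := common_in q r w hqmem hrmem hqr.ne hwq hwr
      rw [← hT0eq] at hws
      simp only [Set.mem_insert_iff, Set.mem_singleton_iff] at hws
      rcases hws with rfl | rfl | rfl
      · exact hwp rfl
      · exact G.irrefl hwq
      · exact G.irrefl hwr
  · intro t hgood hsub hne
    exfalso
    rcases hgood with ht | ht
    · exact hne (Set.eq_of_subset_of_ncard_le hsub
        (by rw [tri_ncard ht, tri_ncard hsTri]))
    · have h4 := Set.ncard_le_ncard hsub (Set.toFinite _)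
      rw [diamond_ncard ht, tri_ncard hsTri] at h4
      omega

lemma diamond_end_tri (hcubic : IsCubic G) {x m1 m2 y : V}
    (hxm1 : G.Adj x m1) (hxm2 : G.Adj x m2) (hm : G.Adj m1 m2)
    (hm1y : G.Adj m1 y) (hm2y : G.Adj m2 y) (hxy : ¬ G.Adj x y) (hxyne : x ≠ y) :
    ∀ p q, G.Adj x p → G.Adj x q → G.Adj p q → (p = m1 ∧ q = m2) ∨ (p = m2 ∧ q = m1) := by
  have hN1 : G.neighborSet m1 = {x, m2, y} :=
    nbhd_eq hcubic hxm1.symm hm hm1y hxm2.ne hxyne hm2y.ne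
  have hN2 : G.neighborSet m2 = {x, m1, y} :=
    nbhd_eq hcubic hxm2.symm hm.symm hm2y hxm1.ne hxyne hm1y.ne
  intro p q hxp hxq hpq
  by_cases hp1 : p = m1
  · subst hp1
    refine Or.inl ⟨rfl, ?_⟩
    rcases adj_of_nbhd hN1 hpq with rfl | rfl | rfl
    · exact absurd hxq (G.irrefl)
    · rfl
    · exact absurd hxq hxy
  by_cases hp2 : p = m2
  · subst hp2
    refine Or.inr ⟨rfl, ?_⟩
    rcases adj_of_nbhd hN2 hpq with rfl | rfl | rfl
    · exact absurd hxq (G.irrefl)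
    · rfl
    · exact absurd hxq hxy
  · exfalso
    have hNx : G.neighborSet x = {m1, m2, p} :=
      nbhd_eq hcubic hxm1 hxm2 hxp hm.ne (Ne.symm hp1) (Ne.symm hp2)
    rcases adj_of_nbhd hNx hxq with rfl | rfl | rfl
    · rcases adj_of_nbhd hN1 hpq.symm with rfl | rfl | rfl
      · exact G.irrefl hxp
      · exact hp2 rfl
      · exact hxy hxp
    · rcases adj_of_nbhd hN2 hpq.symm with rfl | rfl | rfl
      · exact G.irrefl hxp
      · exact hp1 rfl
      · exact hxy hxp
    · exact G.irrefl hpq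

lemma diamond_key (hcubic : IsCubic G) {x m1 m2 y : V}
    (hxm1 : G.Adj x m1) (hxm2 : G.Adj x m2) (hm : G.Adj m1 m2)
    (hm1y : G.Adj m1 y) (hm2y : G.Adj m2 y) (hxy : ¬ G.Adj x y) (hxyne : x ≠ y) :
    MaxProp G {x, m1, m2, y} := by
  have hsDia : IsDiamondSet G {x, m1, m2, y} :=
    ⟨x, m1, m2, y, rfl, hxyne, hxm1, hxm2, hm, hm1y, hm2y, hxy⟩
  have hN1 : G.neighborSet m1 = {x, m2, y} :=
    nbhd_eq hcubic hxm1.symm hm hm1y hxm2.ne hxyne hm2y.ne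
  have hN2 : G.neighborSet m2 = {x, m1, y} :=
    nbhd_eq hcubic hxm2.symm hm.symm hm2y hxm1.ne hxyne hm1y.ne
  have hsubA : ({x, m1, m2} : Set V) ⊆ {x, m1, m2, y} := by intro z hz; simp at hz ⊢; tauto
  have hsubB : ({m1, m2, y} : Set V) ⊆ {x, m1, m2, y} := by intro z hz; simp at hz ⊢; tauto
  have hN1s : ∀ w, G.Adj m1 w → w ∈ ({x, m1, m2, y} : Set V) := by
    intro w hw
    rcases adj_of_nbhd hN1 hw with rfl | rfl | rfl <;> simp
  have hN2s : ∀ w, G.Adj m2 w → w ∈ ({x, m1, m2, y} : Set V) := by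
    intro w hw
    rcases adj_of_nbhd hN2 hw with rfl | rfl | rfl <;> simp
  -- classification of triangles meeting the diamond
  have TT : ∀ t, IsTriangleSet G t → (∃ u, u ∈ t ∧ u ∈ ({x, m1, m2, y} : Set V)) →
      t = {x, m1, m2} ∨ t = {m1, m2, y} := by
    rintro t ht ⟨u, hut, hus⟩
    obtain ⟨p, q, rfl, hup, huq, hpq⟩ := tri_mem_structure ht hut
    simp only [Set.mem_insert_iff, Set.mem_singleton_iff] at hus
    rcases hus with rfl | rfl | rfl | rfl
    · rcases diamond_end_tri hcubic hxm1 hxm2 hm hm1y hm2y hxy hxyne p q hup huq hpq with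
        ⟨rfl, rfl⟩ | ⟨rfl, rfl⟩
      · exact Or.inl rfl
      · exact Or.inl (by ext z; simp; tauto)
    · rcases adj_of_nbhd hN1 hup with rfl | rfl | rfl <;>
        rcases adj_of_nbhd hN1 huq with rfl | rfl | rfl
      · exact absurd hpq G.irrefl
      · exact Or.inl (by ext z; simp; tauto)
      · exact absurd hpq hxy
      · exact Or.inl (by ext z; simp; tauto)
      · exact absurd hpq G.irrefl
      · exact Or.inr rfl
      · exact absurd hpq.symm hxy
      · exact Or.inr (by ext z; simp; tauto)
      · exact absurd hpq G.irrefl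
    · rcases adj_of_nbhd hN2 hup with rfl | rfl | rfl <;>
        rcases adj_of_nbhd hN2 huq with rfl | rfl | rfl
      · exact absurd hpq G.irrefl
      · exact Or.inl (by ext z; simp; tauto)
      · exact absurd hpq hxy
      · exact Or.inl (by ext z; simp; tauto)
      · exact absurd hpq G.irrefl
      · exact Or.inr (by ext z; simp; tauto)
      · exact absurd hpq.symm hxy
      · exact Or.inr (by ext z; simp; tauto)
      · exact absurd hpq G.irrefl
    · have hyx : ¬ G.Adj u x := fun h => hxy h.symm
      rcases diamond_end_tri hcubic hm1y.symm hm2y.symm hm hxm1.symm hxm2.symm hyx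
        (Ne.symm hxyne) p q hup huq hpq with ⟨rfl, rfl⟩ | ⟨rfl, rfl⟩
      · exact Or.inr (by ext z; simp; tauto)
      · exact Or.inr (by ext z; simp; tauto)
  refine ⟨Or.inr hsDia, ?_, ?_⟩
  · rintro t (ht | ht) hmeet
    · rcases TT t ht hmeet with h | h
      · rw [h]; exact hsubA
      · rw [h]; exact hsubB
    · obtain ⟨u, hut, hus⟩ := hmeet
      obtain ⟨p, q, r, w, hteq, hupos, hpq, hpr, hqr, hwq, hwr, hwp⟩ :=
        diamond_mem_structure ht hut
      have hT0 : IsTriangleSet G {p, q, r} := ⟨p, q, r, rfl, hpq, hpr, hqr⟩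
      have humem : u ∈ ({p, q, r} : Set V) := by
        rcases hupos with rfl | rfl | rfl <;> simp
      have hTT := TT _ hT0 ⟨u, humem, hus⟩
      have htri_sub : ({p, q, r} : Set V) ⊆ {x, m1, m2, y} := by
        rcases hTT with h | h <;> rw [h]
        · exact hsubA
        · exact hsubB
      have hw : w ∈ ({x, m1, m2, y} : Set V) := by
        have hq' : q ∈ ({p, q, r} : Set V) := by simp
        have hr' : r ∈ ({p, q, r} : Set V) := by simp
        rcases hTT with h | h <;> rw [h] at hq' hr' <;>
          simp only [Set.mem_insert_iff, Set.mem_singleton_iff] at hq' hr'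
        · rcases hq' with rfl | rfl | rfl
          · rcases hr' with rfl | rfl | rfl
            · exact absurd rfl hqr.ne
            · exact hN1s w hwr.symm
            · exact hN2s w hwr.symm
          · exact hN1s w hwq.symm
          · exact hN2s w hwq.symm
        · rcases hq' with rfl | rfl | rfl
          · exact hN1s w hwq.symm
          · exact hN2s w hwq.symm
          · rcases hr' with rfl | rfl | rfl
            · exact hN1s w hwr.symm
            · exact hN2s w hwr.symm
            · exact absurd rfl hqr.ne
      rw [hteq]
      intro z hz
      simp only [Set.mem_insert_iff, Set.mem_singleton_iff] at hz
      rcases hz with rfl | rfl | rfl | rfl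
      · exact htri_sub (by simp)
      · exact htri_sub (by simp)
      · exact htri_sub (by simp)
      · exact hw
  · intro t hgood hsub hne
    rcases hgood with ht | ht
    · obtain ⟨u, hut⟩ := tri_nonempty ht
      rcases TT t ht ⟨u, hut, hsub hut⟩ with h | h
      · -- t = {x, m1, m2}; use w := y
        subst h
        refine ⟨y, by simp, ?_, ?_⟩
        · intro hy
          simp only [Set.mem_insert_iff, Set.mem_singleton_iff] at hy
          rcases hy with rfl | rfl | rfl
          · exact hxyne rfl
          · exact hm1y.ne rfl
          · exact hm2y.ne rfl
        · intro t' hgood' hyt' hsub'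
          have hm1t' : m1 ∈ t' := by
            rcases hgood' with ht' | ht'
            · rcases TT t' ht' ⟨y, hyt', by simp⟩ with h' | h'
              · exfalso
                rw [h'] at hyt'
                simp only [Set.mem_insert_iff, Set.mem_singleton_iff] at hyt'
                rcases hyt' with rfl | rfl | rfl
                · exact hxyne rfl
                · exact hm1y.ne rfl
                · exact hm2y.ne rfl
              · rw [h']; simp
            · have h' : t' = {x, m1, m2, y} := Set.eq_of_subset_of_ncard_le hsub'
                (by rw [diamond_ncard ht', diamond_ncard hsDia])
              rw [h']; simp
          exact ⟨m1, hm1t', by simp⟩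
      · -- t = {m1, m2, y}; use w := x
        subst h
        refine ⟨x, by simp, ?_, ?_⟩
        · intro hx
          simp only [Set.mem_insert_iff, Set.mem_singleton_iff] at hx
          rcases hx with rfl | rfl | rfl
          · exact hxm1.ne rfl
          · exact hxm2.ne rfl
          · exact hxyne rfl
        · intro t' hgood' hxt' hsub'
          have hm1t' : m1 ∈ t' := by
            rcases hgood' with ht' | ht'
            · rcases TT t' ht' ⟨x, hxt', by simp⟩ with h' | h'
              · rw [h']; simp
              · exfalso
                rw [h'] at hxt'
                simp only [Set.mem_insert_iff, Set.mem_singleton_iff] at hxt'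
                rcases hxt' with rfl | rfl | rfl
                · exact hxm1.ne rfl
                · exact hxm2.ne rfl
                · exact hxyne rfl
            · have h' : t' = {x, m1, m2, y} := Set.eq_of_subset_of_ncard_le hsub'
                (by rw [diamond_ncard ht', diamond_ncard hsDia])
              rw [h']; simp
          exact ⟨m1, hm1t', by simp⟩
    · exfalso
      exact hne (Set.eq_of_subset_of_ncard_le hsub
        (by rw [diamond_ncard ht, diamond_ncard hsDia]))

lemma k4_absurd (hconn : G.Connected) (hcubic : IsCubic G) {v a b c : V}
    (hva : G.Adj v a) (hvb : G.Adj v b) (hvc : G.Adj v c)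
    (hab : G.Adj a b) (hac : G.Adj a c) (hbc : G.Adj b c) :
    Nonempty (G ≃g (⊤ : SimpleGraph (Fin 4))) := by
  classical
  have hNv : G.neighborSet v = {a, b, c} := nbhd_eq hcubic hva hvb hvc hab.ne hac.ne hbc.ne
  have hNa : G.neighborSet a = {v, b, c} := nbhd_eq hcubic hva.symm hab hac hvb.ne hvc.ne hbc.ne
  have hNb : G.neighborSet b = {v, a, c} :=
    nbhd_eq hcubic hvb.symm hab.symm hbc hva.ne hvc.ne hac.ne
  have hNc : G.neighborSet c = {v, a, b} :=
    nbhd_eq hcubic hvc.symm hac.symm hbc.symm hva.ne hvb.ne hab.ne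
  have hclosed : ∀ u w, u ∈ ({v, a, b, c} : Set V) → G.Adj u w →
      w ∈ ({v, a, b, c} : Set V) := by
    intro u w hu huw
    simp only [Set.mem_insert_iff, Set.mem_singleton_iff] at hu ⊢
    rcases hu with rfl | rfl | rfl | rfl
    · rcases adj_of_nbhd hNv huw with rfl | rfl | rfl <;> tauto
    · rcases adj_of_nbhd hNa huw with rfl | rfl | rfl <;> tauto
    · rcases adj_of_nbhd hNb huw with rfl | rfl | rfl <;> tauto
    · rcases adj_of_nbhd hNc huw with rfl | rfl | rfl <;> tauto
  have hwalk : ∀ (u w : V), G.Walk u w → u ∈ ({v, a, b, c} : Set V) →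
      w ∈ ({v, a, b, c} : Set V) := by
    intro u w p
    induction p with
    | nil => exact id
    | cons h p ih => intro hu; exact ih (hclosed _ _ hu h)
  have hall : ∀ w, w ∈ ({v, a, b, c} : Set V) := by
    intro w
    obtain ⟨p⟩ := hconn.preconnected v w
    exact hwalk v w p (by simp)
  have n1 : v ≠ a := hva.ne
  have n2 : v ≠ b := hvb.ne
  have n3 : v ≠ c := hvc.ne
  have n4 : a ≠ b := hab.ne
  have n5 : a ≠ c := hac.ne
  have n6 : b ≠ c := hbc.ne
  have s1 : G.Adj a v := hva.symm
  have s2 : G.Adj b v := hvb.symm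
  have s3 : G.Adj c v := hvc.symm
  have s4 : G.Adj b a := hab.symm
  have s5 : G.Adj c a := hac.symm
  have s6 : G.Adj c b := hbc.symm
  have hadj : ∀ p q : V, p ≠ q → G.Adj p q := by
    intro p q hpq
    have hp := hall p
    have hq := hall q
    simp only [Set.mem_insert_iff, Set.mem_singleton_iff] at hp hq
    rcases hp with rfl | rfl | rfl | rfl <;> rcases hq with rfl | rfl | rfl | rfl <;>
      first
        | exact absurd rfl hpq
        | assumption
  have hinj : Function.Injective ![v, a, b, c] := by
    intro i j hij
    fin_cases i <;> fin_cases j <;> simp_all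
  have hsurj : Function.Surjective ![v, a, b, c] := by
    intro w
    have := hall w
    simp only [Set.mem_insert_iff, Set.mem_singleton_iff] at this
    rcases this with rfl | rfl | rfl | rfl
    · exact ⟨0, rfl⟩
    · exact ⟨1, rfl⟩
    · exact ⟨2, rfl⟩
    · exact ⟨3, rfl⟩
  let e : Fin 4 ≃ V := Equiv.ofBijective _ ⟨hinj, hsurj⟩
  refine ⟨⟨e.symm, ?_⟩⟩
  intro p q
  simp only [top_adj, ne_eq, EmbeddingLike.apply_eq_iff_eq]
  exact ⟨fun h => hadj p q h, fun h => h.ne⟩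

lemma one_edge_key (hcubic : IsCubic G) {v a b : V}
    (hva : G.Adj v a) (hvb : G.Adj v b) (hab : G.Adj a b)
    (honly1 : ∀ w, G.Adj v w → G.Adj w a → w = b)
    (honly2 : ∀ w, G.Adj v w → G.Adj w b → w = a) :
    ∃ s, v ∈ s ∧ MaxProp G s := by
  classical
  by_cases hd : ∃ d, d ≠ v ∧ G.Adj d a ∧ G.Adj d b
  · obtain ⟨d, hdv, hda, hdb⟩ := hd
    have hvd : ¬ G.Adj v d := by
      intro h
      have := honly1 d h hda
      subst this
      exact G.irrefl hdb
    exact ⟨{v, a, b, d}, by simp,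
      diamond_key hcubic hva hvb hab hda.symm hdb.symm hvd (Ne.symm hdv)⟩
  · push_neg at hd
    have h3 : ∀ w, G.Adj w a → G.Adj w b → w = v := by
      intro w hwa hwb
      by_contra hwv
      exact hd w hwv hwa hwb
    exact ⟨{v, a, b}, by simp,
      tri_key hcubic hva hvb hab (fun w hwv hwa => honly1 w hwv.symm hwa)
        (fun w hwv hwb => honly2 w hwv.symm hwb) h3⟩

lemma key (hconn : G.Connected) (hclaw : IsClawFree G) (hcubic : IsCubic G)
    (hK4 : ¬ Nonempty (G ≃g (⊤ : SimpleGraph (Fin 4)))) :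
    ∀ v : V, ∃ s, v ∈ s ∧ MaxProp G s := by
  classical
  intro v
  obtain ⟨a, b, c, hab', hac', hbc', hN⟩ := Set.ncard_eq_three.mp (hcubic v)
  have hva : G.Adj v a := by
    have : a ∈ G.neighborSet v := by rw [hN]; simp
    exact this
  have hvb : G.Adj v b := by
    have : b ∈ G.neighborSet v := by rw [hN]; simp
    exact this
  have hvc : G.Adj v c := by
    have : c ∈ G.neighborSet v := by rw [hN]; simp
    exact this
  by_cases h1 : G.Adj a b <;> by_cases h2 : G.Adj a c <;> by_cases h3 : G.Adj b c
  · exact absurd (k4_absurd hconn hcubic hva hvb hvc h1 h2 h3) hK4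
  · -- edges ab, ac; diamond (b, v, a, c)
    exact ⟨{b, v, a, c}, by simp, diamond_key hcubic hvb.symm h1.symm hva hvc h2 h3 hbc'⟩
  · -- edges ab, bc; diamond (a, v, b, c)
    exact ⟨{a, v, b, c}, by simp, diamond_key hcubic hva.symm h1 hvb hvc h3 h2 hac'⟩
  · -- only edge ab
    refine one_edge_key hcubic hva hvb h1 ?_ ?_
    · intro w hvw hwa
      rcases adj_of_nbhd hN hvw with rfl | rfl | rfl
      · exact absurd hwa G.irrefl
      · rfl
      · exact absurd hwa.symm h2
    · intro w hvw hwb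
      rcases adj_of_nbhd hN hvw with rfl | rfl | rfl
      · rfl
      · exact absurd hwb G.irrefl
      · exact absurd hwb.symm h3
  · -- edges ac, bc; diamond (v? ...) common vertex c : diamond (b, v? no...)
    -- edges: ac, bc, ¬ab : common vertex c, diamond (a, v, c, b)
    exact ⟨{a, v, c, b}, by simp, diamond_key hcubic hva.symm h2 hvc hvb h3.symm h1 hab'⟩
  · -- only edge ac
    refine one_edge_key hcubic hva hvc h2 ?_ ?_
    · intro w hvw hwa
      rcases adj_of_nbhd hN hvw with rfl | rfl | rfl
      · exact absurd hwa G.irrefl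
      · exact absurd hwa.symm h1
      · rfl
    · intro w hvw hwc
      rcases adj_of_nbhd hN hvw with rfl | rfl | rfl
      · rfl
      · exact absurd hwc h3
      · exact absurd hwc G.irrefl
  · -- only edge bc
    refine one_edge_key hcubic hvb hvc h3 ?_ ?_
    · intro w hvw hwb
      rcases adj_of_nbhd hN hvw with rfl | rfl | rfl
      · exact absurd hwb h1
      · exact absurd hwb G.irrefl
      · rfl
    · intro w hvw hwc
      rcases adj_of_nbhd hN hvw with rfl | rfl | rfl
      · exact absurd hwc h2
      · rfl
      · exact absurd hwc G.irrefl
  · exact absurd ⟨v, a, b, c, hva, hvb, hvc, hab', hac', hbc', h1, h2, h3⟩ hclaw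

lemma main_result (hconn : G.Connected) (hclaw : IsClawFree G) (hcubic : IsCubic G)
    (hK4 : ¬ Nonempty (G ≃g (⊤ : SimpleGraph (Fin 4)))) :
    ∃! P : Set (Set V),
      (∀ s ∈ P, IsTriangleSet G s ∨ IsDiamondSet G s) ∧
      (∀ v : V, ∃! s, s ∈ P ∧ v ∈ s) := by
  classical
  choose f hmem hgood hmax hsplit using key hconn hclaw hcubic hK4
  have hfeq : ∀ v u, u ∈ f v → f u = f v := fun v u hu =>
    Set.Subset.antisymm (hmax v (f u) (hgood u) ⟨u, hmem u, hu⟩)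
      (hmax u (f v) (hgood v) ⟨u, hu, hmem u⟩)
  refine ⟨Set.range f, ⟨?_, ?_⟩, ?_⟩
  · rintro s ⟨v, rfl⟩
    exact hgood v
  · intro v
    refine ⟨f v, ⟨⟨v, rfl⟩, hmem v⟩, ?_⟩
    rintro s ⟨⟨w, rfl⟩, hvs⟩
    exact (hfeq w v hvs).symm
  · rintro Q ⟨hQgood, hQpart⟩
    have hpart_eq : ∀ v s, s ∈ Q → v ∈ s → s = f v := by
      intro v s hsQ hvs
      have hsub : s ⊆ f v := hmax v s (hQgood s hsQ) ⟨v, hvs, hmem v⟩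
      by_contra hne
      obtain ⟨w, hwfv, hwns, hprop⟩ := hsplit v s (hQgood s hsQ) hsub hne
      obtain ⟨t', ⟨ht'Q, hwt'⟩, -⟩ := hQpart w
      have ht'sub : t' ⊆ f v := hmax v t' (hQgood t' ht'Q) ⟨w, hwt', hwfv⟩
      obtain ⟨z, hzt', hzs⟩ := hprop t' (hQgood t' ht'Q) hwt' ht'sub
      obtain ⟨u, -, huniq⟩ := hQpart z
      have e1 : s = u := huniq s ⟨hsQ, hzs⟩
      have e2 : t' = u := huniq t' ⟨ht'Q, hzt'⟩
      rw [e1, ← e2] at hwns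
      exact hwns hwt'
    ext s
    constructor
    · intro hsQ
      have hne : s.Nonempty := by
        rcases hQgood s hsQ with ht | ht
        · exact tri_nonempty ht
        · exact diamond_nonempty ht
      obtain ⟨v, hv⟩ := hne
      exact ⟨v, (hpart_eq v s hsQ hv).symm⟩
    · rintro ⟨v, rfl⟩
      obtain ⟨s', ⟨hs'Q, hvs'⟩, -⟩ := hQpart v
      rw [← hpart_eq v s' hs'Q hvs']
      exact hs'Q

end Tri

/-- If `G ≠ K_4` is a connected claw-free cubic graph, then `V(G)` can be uniquely
partitioned into sets each of which induces a triangle or a diamond in `G`. -/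
theorem triangle_diamond_partition [Fintype V] (G : SimpleGraph V)
    (hconn : G.Connected) (hclaw : IsClawFree G) (hcubic : IsCubic G)
    (hK4 : ¬ Nonempty (G ≃g (⊤ : SimpleGraph (Fin 4)))) :
    ∃! P : Set (Set V),
      (∀ s ∈ P, IsTriangleSet G s ∨ IsDiamondSet G s) ∧
      (∀ v : V, ∃! s, s ∈ P ∧ v ∈ s) := by
  exact main_result hconn hclaw hcubic hK4
end

section
/- Let G be a connected claw-free cubic graph that has a good decomposition with spanning tree T, and let C be a cycle of G that uses no edge of T. If C is not a triangle, then C is chordless, i.e., no edge of G joins two non-consecutive vertices of C. -/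
/-!
Let `uw` be a chord of a cycle `C` avoiding `T`. In the cubic graph `G`, the three neighbours
of `u` are its two cycle-neighbours and `w`; the cycle edges are not in `T`, so `w` is the only
possible `T`-neighbour of `u`, and symmetrically `u` is the only possible `T`-neighbour of `w`.
Then `{u, w}` is closed under `T`-adjacency, contradicting that the spanning tree `T` reaches
the cycle-neighbours of `u`, which lie outside `{u, w}`.
-/

open SimpleGraph

variable {V : Type*}

namespace SimpleGraph

theorem Reachable.mem_of_adj_closed {G : SimpleGraph V} {S : Set V}
    (hS : ∀ x y, x ∈ S → G.Adj x y → y ∈ S) {x y : V} (hxy : G.Reachable x y) (hx : x ∈ S) :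
    y ∈ S := by
  by_contra hy
  obtain ⟨p⟩ := hxy
  obtain ⟨d, -, hd, hd'⟩ := p.exists_boundary_dart S hx hy
  exact hd' (hS _ _ hd d.adj)

theorem neighborSet_subset_of_ncard_eq_three {G : SimpleGraph V} {u a b w : V}
    (h3 : (G.neighborSet u).ncard = 3) (ha : G.Adj u a) (hb : G.Adj u b) (hw : G.Adj u w)
    (hab : a ≠ b) (haw : a ≠ w) (hbw : b ≠ w) :
    G.neighborSet u ⊆ {w, a, b} := by
  refine (Set.eq_of_subset_of_ncard_le ?_ ?_ (Set.finite_of_ncard_ne_zero (by omega))).ge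
  · rintro x (rfl | rfl | rfl) <;> assumption
  · rw [h3, Set.ncard_insert_of_notMem (by simp [haw.symm, hbw.symm]),
      Set.ncard_insert_of_notMem (by simp [hab]), Set.ncard_singleton]

namespace Walk

variable {G : SimpleGraph V} {v u : V} {c : G.Walk v v}

theorem IsCycle.exists_ne_mk_mem_edges (hc : c.IsCycle) (hu : u ∈ c.support) :
    ∃ a b, a ≠ b ∧ s(u, a) ∈ c.edges ∧ s(u, b) ∈ c.edges := by
  classical
  have hc' := hc.rotate hu
  have hmem := fun e => (c.rotate_edges u hu).mem_iff (a := e)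
  refine ⟨_, _, hc'.snd_ne_penultimate, (hmem _).mp (mk_start_snd_mem_edges hc'.not_nil), ?_⟩
  rw [Sym2.eq_swap]
  exact (hmem _).mp (mk_penultimate_end_mem_edges hc'.not_nil)

theorem IsCycle.eq_of_adj_of_chord {H : SimpleGraph V} {w x : V} (hc : c.IsCycle)
    (hHG : H ≤ G) (hH : ∀ e ∈ c.edges, e ∉ H.edgeSet) (h3 : (G.neighborSet u).ncard = 3)
    (hu : u ∈ c.support) (huw : G.Adj u w) (hchord : s(u, w) ∉ c.edges) (hux : H.Adj u x) :
    x = w := by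
  obtain ⟨a, b, hab, ha, hb⟩ := hc.exists_ne_mk_mem_edges hu
  have hsub := neighborSet_subset_of_ncard_eq_three h3 (c.adj_of_mem_edges ha)
    (c.adj_of_mem_edges hb) huw hab (by rintro rfl; exact hchord ha)
    (by rintro rfl; exact hchord hb)
  rcases hsub (hHG hux) with rfl | rfl | rfl
  · rfl
  · exact absurd hux (hH _ ha)
  · exact absurd hux (hH _ hb)

end Walk

end SimpleGraph

theorem cycle_avoiding_tree_chordless_general (G T M O : SimpleGraph V)
    (hcubic : IsCubic G)
    (hgood : IsGoodDecomposition G T M O)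
    {v : V} (c : G.Walk v v) (hc : c.IsCycle)
    (hT : ∀ e ∈ c.edges, e ∉ T.edgeSet) :
    ∀ u w : V, u ∈ c.support → w ∈ c.support → G.Adj u w → s(u, w) ∈ c.edges := by
  intro u w hu hw huw
  by_contra hchord
  obtain ⟨hTG, -, -, hTtree, -⟩ := hgood
  have hclosed : ∀ x y, x ∈ ({u, w} : Set V) → T.Adj x y → y ∈ ({u, w} : Set V) := by
    rintro x y (rfl | rfl) hxy
    · exact .inr (hc.eq_of_adj_of_chord hTG hT (hcubic _) hu huw hchord hxy)
    · refine .inl (hc.eq_of_adj_of_chord hTG hT (hcubic _) hw huw.symm ?_ hxy)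
      rwa [Sym2.eq_swap]
  obtain ⟨a, -, -, ha, -⟩ := hc.exists_ne_mk_mem_edges hu
  rcases (hTtree.connected.preconnected u a).mem_of_adj_closed hclosed (.inl rfl) with rfl | rfl
  · exact (c.adj_of_mem_edges ha).ne rfl
  · exact hchord ha

/-- Lemma 2(i): in a connected claw-free cubic graph with a good decomposition `{T, M, O}`,
every cycle avoiding the spanning tree `T` that is not a triangle is chordless: every edge
of `G` joining two vertices of the cycle is an edge of the cycle. -/
theorem cycle_avoiding_tree_chordless [Fintype V] (G T M O : SimpleGraph V)
    (hconn : G.Connected) (hclaw : IsClawFree G) (hcubic : IsCubic G)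
    (hgood : IsGoodDecomposition G T M O)
    {v : V} (c : G.Walk v v) (hc : c.IsCycle)
    (hT : ∀ e ∈ c.edges, e ∉ T.edgeSet)
    (htri : c.length ≠ 3) :
    ∀ u w : V, u ∈ c.support → w ∈ c.support → G.Adj u w → s(u, w) ∈ c.edges :=
  cycle_avoiding_tree_chordless_general G T M O hcubic hgood c hc hT
end

section
/- Let G be a connected claw-free cubic graph that has a good decomposition with spanning tree T, and let C be a cycle of G that uses no edge of T. If C is not a triangle, then no vertex of C lies in a diamond of G, where a diamond of G means a set of four vertices of G inducing a subgraph isomorphic to K_4 minus an edge. -/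
open SimpleGraph

variable {V : Type*}

/-!
Every vertex meets the spanning tree `T`, `M` is a matching and `O` is 2-regular, so in the cubic
graph `G` a vertex lying on `O` has exactly two `O`-edges and one `T`-edge: the vertices of `O` are
leaves of `T`. Hence a cycle avoiding `T` runs along `O`, its two edges at each of its vertices
being the two `O`-edges there.

Let `a, b, c, d` be a diamond with `a d` the missing edge and `a'` the third neighbour of `a`; some
vertex of the diamond lies on the cycle, hence on `O`, and then so does a middle vertex, say `b`.
Let `y` be the `T`-neighbour of `b`. If `y` lies on `O`, or `y = c`, then `T` is a star centred at
`b` or at `c`, which is impossible because `a'` is adjacent to neither. Otherwise `y ∈ {a, d}` is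
off `O`, and the remaining three vertices of the diamond form a triangle of `O`. The cycle passes
through that triangle, so it is that triangle.
-/

namespace Set

variable {α : Type*} {s : Set α} {x y z : α}

theorem eq_pair_of_ncard_eq_two (hs : s.ncard = 2) (hx : x ∈ s) (hy : y ∈ s) (hxy : x ≠ y) :
    s = {x, y} :=
  (eq_of_subset_of_ncard_le (insert_subset hx (singleton_subset_iff.mpr hy))
    (by rw [hs, ncard_pair hxy]) (finite_of_ncard_ne_zero (by omega))).symm

theorem eq_triple_of_ncard_eq_three (hs : s.ncard = 3) (hx : x ∈ s) (hy : y ∈ s) (hz : z ∈ s)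
    (hxy : x ≠ y) (hxz : x ≠ z) (hyz : y ≠ z) : s = {x, y, z} :=
  (eq_of_subset_of_ncard_le (insert_subset hx (insert_subset hy (singleton_subset_iff.mpr hz)))
    (by rw [hs, ncard_eq_three.mpr ⟨x, y, z, hxy, hxz, hyz, rfl⟩])
    (finite_of_ncard_ne_zero (by omega))).symm

end Set

namespace SimpleGraph

variable {G : SimpleGraph V}

theorem Reachable.mem_of_forall_adj_mem {S : Set V} (hS : ∀ x ∈ S, ∀ y, G.Adj x y → y ∈ S)
    {u w : V} (huw : G.Reachable u w) (hu : u ∈ S) : w ∈ S :=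
  huw.mem_subgraphVerts (H := (⊤ : G.Subgraph).induce S)
    (fun x hx y hxy => ⟨hx, hS x hx y hxy, hxy⟩) hu

theorem Connected.eq_or_adj_of_forall_adj_adj_eq (hG : G.Connected) {x : V}
    (hx : ∀ y, G.Adj x y → ∀ z, G.Adj y z → z = x) (w : V) : w = x ∨ G.Adj x w := by
  refine (hG x w).mem_of_forall_adj_mem (S := {w | w = x ∨ G.Adj x w}) ?_ (Or.inl rfl)
  rintro y (rfl | hxy) z hyz
  · exact Or.inr hyz
  · exact Or.inl (hx y hxy z hyz)

theorem Walk.IsCycle.length_eq_three_of_toSubgraph_adj {v : V} {c : G.Walk v v}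
    (hc : c.IsCycle) {x y z : V} (hxy : c.toSubgraph.Adj x y) (hyz : c.toSubgraph.Adj y z)
    (hzx : c.toSubgraph.Adj z x) : c.length = 3 := by
  classical
  have hnbr : ∀ {p q r w}, c.toSubgraph.Adj p q → c.toSubgraph.Adj p r → q ≠ r →
      c.toSubgraph.Adj p w → w = q ∨ w = r := by
    intro p q r w hpq hpr hqr hpw
    have hw : w ∈ c.toSubgraph.neighborSet p := hpw
    rwa [Set.eq_pair_of_ncard_eq_two (hc.ncard_neighborSet_toSubgraph_eq_two
      (c.mem_verts_toSubgraph.mp hpq.fst_mem)) hpq hpr hqr] at hw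
  have hclosed : ∀ p ∈ ({x, y, z} : Set V), ∀ w, c.toSubgraph.Adj p w →
      w ∈ ({x, y, z} : Set V) := by
    rintro p (rfl | rfl | rfl) w hw
    · rcases hnbr hxy hzx.symm hyz.ne hw with rfl | rfl <;> simp
    · rcases hnbr hxy.symm hyz hzx.ne.symm hw with rfl | rfl <;> simp
    · rcases hnbr hzx hyz.symm hxy.ne hw with rfl | rfl <;> simp
  have hsupp : ∀ w ∈ c.support.tail, w ∈ ({x, y, z} : Finset V) := by
    intro w hw
    have hw' : w ∈ c.toSubgraph.verts := c.mem_verts_toSubgraph.mpr (List.mem_of_mem_tail hw)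
    have := (c.toSubgraph_connected.preconnected ⟨x, hxy.fst_mem⟩ ⟨w, hw'⟩).mem_of_forall_adj_mem
      (S := {p | p.1 ∈ ({x, y, z} : Set V)}) (fun p hp q hpq => hclosed _ hp _ hpq) (by simp)
    simpa using this
  have hcard : c.support.tail.toFinset.card ≤ 3 :=
    (Finset.card_le_card fun w hw => hsupp w (List.mem_toFinset.mp hw)).trans Finset.card_le_three
  rw [List.toFinset_card_of_nodup hc.support_nodup, List.length_tail, c.length_support] at hcard
  have := hc.three_le_length
  omega

end SimpleGraph

namespace IsGoodDecomposition

variable {G T M O : SimpleGraph V} {x w t z : V}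

theorem tree_le (h : IsGoodDecomposition G T M O) : T ≤ G := h.1

theorem tree_connected (h : IsGoodDecomposition G T M O) : T.Connected := h.2.2.2.1.connected

theorem ncard_neighborSet_eq_two (h : IsGoodDecomposition G T M O) (hx : x ∈ O.support) :
    (O.neighborSet x).ncard = 2 :=
  h.2.2.2.2.2.1.2 x hx

theorem not_tree_adj (h : IsGoodDecomposition G T M O) (hxz : O.Adj x z) : ¬ T.Adj x z :=
  fun hT => Set.disjoint_left.mp h.2.2.2.2.2.2.2.2.1 (show s(x, z) ∈ T.edgeSet from hT) hxz

theorem exists_tree_adj (h : IsGoodDecomposition G T M O) (hxw : x ≠ w) : ∃ t, T.Adj x t :=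
  have : Nontrivial V := ⟨⟨x, w, hxw⟩⟩
  h.tree_connected.preconnected.exists_adj_of_nontrivial x

theorem twoRegular_adj_of_ne_of_tree_adj (h : IsGoodDecomposition G T M O) (hG : IsCubic G)
    (hxw : O.Adj x w) (hxt : T.Adj x t) (hxz : G.Adj x z) (hzt : z ≠ t) : O.Adj x z := by
  have ⟨_, _, hOG, _⟩ := h
  obtain ⟨p, q, hpq, hN⟩ := Set.ncard_eq_two.mp (h.ncard_neighborSet_eq_two ⟨w, hxw⟩)
  have hp : O.Adj x p := show p ∈ O.neighborSet x by simp [hN]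
  have hq : O.Adj x q := show q ∈ O.neighborSet x by simp [hN]
  have hpt : p ≠ t := by rintro rfl; exact h.not_tree_adj hp hxt
  have hqt : q ≠ t := by rintro rfl; exact h.not_tree_adj hq hxt
  have hz : z ∈ G.neighborSet x := hxz
  rw [Set.eq_triple_of_ncard_eq_three (hG x) (hOG hp) (hOG hq) (h.tree_le hxt)
    hpq hpt hqt] at hz
  rcases hz with rfl | rfl | rfl
  exacts [hp, hq, absurd rfl hzt]

theorem eq_of_tree_adj (h : IsGoodDecomposition G T M O) (hG : IsCubic G)
    (hxw : O.Adj x w) (hxt : T.Adj x t) (hxz : T.Adj x z) : z = t :=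
  by_contra fun hzt =>
    h.not_tree_adj (h.twoRegular_adj_of_ne_of_tree_adj hG hxw hxt (h.tree_le hxz) hzt) hxz

theorem tree_adj_of_not_twoRegular_adj (h : IsGoodDecomposition G T M O) (hG : IsCubic G)
    (hxw : O.Adj x w) (hxz : G.Adj x z) (hnz : ¬ O.Adj x z) : T.Adj x z := by
  obtain ⟨t, hxt⟩ := h.exists_tree_adj hxw.ne
  obtain rfl : z = t :=
    by_contra fun hzt => hnz (h.twoRegular_adj_of_ne_of_tree_adj hG hxw hxt hxz hzt)
  exact hxt

theorem not_matching_adj (h : IsGoodDecomposition G T M O) (hG : IsCubic G)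
    (hxw : O.Adj x w) : ¬ M.Adj x z := fun hxz => by
  have ⟨_, hMG, _, _, _, _, _, hTM, _, hMO⟩ := h
  have hnO : ¬ O.Adj x z := Set.disjoint_left.mp hMO (show s(x, z) ∈ M.edgeSet from hxz)
  exact Set.disjoint_left.mp hTM
    (show s(x, z) ∈ T.edgeSet from h.tree_adj_of_not_twoRegular_adj hG hxw (hMG hxz) hnO) hxz

theorem eq_or_tree_adj_of_forall_tree_adj_mem_support (h : IsGoodDecomposition G T M O)
    (hG : IsCubic G) (hx : ∀ z, T.Adj x z → z ∈ O.support) (w : V) : w = x ∨ T.Adj x w :=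
  h.tree_connected.eq_or_adj_of_forall_adj_adj_eq (fun z hxz _ hzy =>
    have ⟨_, hzO⟩ := hx z hxz
    h.eq_of_tree_adj hG hzO hxz.symm hzy) w

theorem twoRegular_adj_or_twoRegular_adj (h : IsGoodDecomposition G T M O) (hG : IsCubic G)
    {p q : V} (hxw : O.Adj x w) (hxp : G.Adj x p) (hxq : G.Adj x q) (hpq : p ≠ q) :
    O.Adj x p ∨ O.Adj x q := by
  obtain ⟨t, hxt⟩ := h.exists_tree_adj hxw.ne
  by_cases hpt : p = t
  · exact .inr (h.twoRegular_adj_of_ne_of_tree_adj hG hxw hxt hxq (hpt ▸ hpq.symm))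
  · exact .inl (h.twoRegular_adj_of_ne_of_tree_adj hG hxw hxt hxp hpt)

theorem twoRegular_triangle_of_tree_adj_of_not_mem_support (h : IsGoodDecomposition G T M O)
    (hG : IsCubic G) {a b c d : V} (hbw : O.Adj b w) (hba : T.Adj b a) (ha : a ∉ O.support)
    (hbc : G.Adj b c) (hbd : G.Adj b d) (hca : G.Adj c a) (hcd : G.Adj c d) (hc : c ≠ a)
    (hd : d ≠ a) : O.Adj b c ∧ O.Adj c d ∧ O.Adj d b := by
  have hbc' := h.twoRegular_adj_of_ne_of_tree_adj hG hbw hba hbc hc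
  have hbd' := h.twoRegular_adj_of_ne_of_tree_adj hG hbw hba hbd hd
  have hca' := h.tree_adj_of_not_twoRegular_adj hG hbc'.symm hca fun hO => ha ⟨c, hO.symm⟩
  exact ⟨hbc', h.twoRegular_adj_of_ne_of_tree_adj hG hbc'.symm hca' hcd hd, hbd'.symm⟩

theorem exists_twoRegular_triangle_of_diamond_of_mem_support (h : IsGoodDecomposition G T M O)
    (hG : IsCubic G) {a b c d u : V} (hab : G.Adj a b) (hac : G.Adj a c) (hbc : G.Adj b c)
    (hbd : G.Adj b d) (hcd : G.Adj c d) (had : ¬ G.Adj a d) (hne : a ≠ d)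
    (hu : u ∈ ({a, b, c, d} : Set V)) (huO : u ∈ O.support) (hb : b ∈ O.support) :
    ∃ q r, O.Adj u q ∧ O.Adj q r ∧ O.Adj r u := by
  obtain ⟨w, hbw⟩ := hb
  have hNb : G.neighborSet b = {a, c, d} :=
    Set.eq_triple_of_ncard_eq_three (hG b) hab.symm hbc hbd hac.ne hne hcd.ne
  have hNc : G.neighborSet c = {a, b, d} :=
    Set.eq_triple_of_ncard_eq_three (hG c) hac.symm hbc.symm hcd hab.ne hne hbd.ne
  obtain ⟨a', haa', ha'bc⟩ := Set.exists_mem_notMem_of_ncard_lt_ncard (s := {b, c})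
    (t := G.neighborSet a) (by rw [hG a, Set.ncard_pair hbc.ne]; norm_num)
  have ha' : a' ∉ ({a, b, c, d} : Set V) := by
    rintro (rfl | rfl | rfl | rfl)
    exacts [haa'.ne rfl, ha'bc (by simp), ha'bc (by simp), had haa']
  have hstar : ∀ x ∈ ({b, c} : Set V), ¬ ∀ z, T.Adj x z → z ∈ O.support := by
    intro x hx hxO
    rcases h.eq_or_tree_adj_of_forall_tree_adj_mem_support hG hxO a' with rfl | hxa'
    · exact ha'bc hx
    · have : a' ∈ G.neighborSet x := h.tree_le hxa'
      rcases hx with rfl | rfl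
      · rw [hNb] at this; exact ha' (by aesop)
      · rw [hNc] at this; exact ha' (by aesop)
  obtain ⟨y, hby⟩ := h.exists_tree_adj hbw.ne
  have hy : y ∉ O.support := fun hyO =>
    hstar b (by simp) fun z hbz => h.eq_of_tree_adj hG hbw hby hbz ▸ hyO
  have hyN : y ∈ G.neighborSet b := h.tree_le hby
  rw [hNb] at hyN
  rcases hyN with rfl | rfl | rfl
  · obtain ⟨hbc', hcd', hdb'⟩ := h.twoRegular_triangle_of_tree_adj_of_not_mem_support hG hbw hby
      hy hbc hbd hac.symm hcd hac.ne.symm hne.symm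
    rcases hu with rfl | rfl | rfl | rfl
    exacts [absurd huO hy, ⟨_, _, hbc', hcd', hdb'⟩, ⟨_, _, hcd', hdb', hbc'⟩,
      ⟨_, _, hdb', hbc', hcd'⟩]
  · refine absurd (fun z hcz => ?_) (hstar y (by simp))
    have hz : z ∈ G.neighborSet y := h.tree_le hcz
    rw [hNc] at hz
    rcases hz with rfl | rfl | rfl
    · exact ⟨b, (h.twoRegular_adj_of_ne_of_tree_adj hG hbw hby hab.symm hac.ne).symm⟩
    · exact ⟨w, hbw⟩
    · exact ⟨b, (h.twoRegular_adj_of_ne_of_tree_adj hG hbw hby hbd hcd.ne.symm).symm⟩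
  · obtain ⟨hbc', hca', hab'⟩ := h.twoRegular_triangle_of_tree_adj_of_not_mem_support hG hbw hby
      hy hbc hab.symm hcd hac.symm hcd.ne hne
    rcases hu with rfl | rfl | rfl | rfl
    exacts [⟨_, _, hab', hbc', hca'⟩, ⟨_, _, hbc', hca', hab'⟩, ⟨_, _, hca', hab', hbc'⟩,
      absurd huO hy]

theorem exists_twoRegular_triangle_of_mem_diamond (h : IsGoodDecomposition G T M O)
    (hG : IsCubic G) {s : Set V} (hs : IsDiamondSet G s) {u : V} (hu : u ∈ s)
    (huO : u ∈ O.support) : ∃ q r, O.Adj u q ∧ O.Adj q r ∧ O.Adj r u := by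
  obtain ⟨a, b, c, d, rfl, hne, hab, hac, hbc, hbd, hcd, had⟩ := hs
  have hmid : b ∈ O.support ∨ c ∈ O.support := by
    obtain ⟨w, huw⟩ := huO
    rcases hu with rfl | rfl | rfl | rfl
    · exact (h.twoRegular_adj_or_twoRegular_adj hG huw hab hac hbc.ne).imp
        (fun hO => ⟨_, hO.symm⟩) (fun hO => ⟨_, hO.symm⟩)
    · exact .inl ⟨w, huw⟩
    · exact .inr ⟨w, huw⟩
    · exact (h.twoRegular_adj_or_twoRegular_adj hG huw hbd.symm hcd.symm hbc.ne).imp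
        (fun hO => ⟨_, hO.symm⟩) (fun hO => ⟨_, hO.symm⟩)
  rcases hmid with hb | hc
  · exact h.exists_twoRegular_triangle_of_diamond_of_mem_support hG hab hac hbc hbd hcd had hne
      hu huO hb
  · exact h.exists_twoRegular_triangle_of_diamond_of_mem_support hG hac hab hbc.symm hcd hbd had
      hne (by rwa [Set.insert_comm b c] at hu) huO hc

variable {v : V} {c : G.Walk v v}

theorem twoRegular_adj_of_toSubgraph_adj (h : IsGoodDecomposition G T M O) (hG : IsCubic G)
    (hc : c.IsCycle) (hcT : ∀ e ∈ c.edges, e ∉ T.edgeSet) {y : V} (hxy : c.toSubgraph.Adj x y) :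
    O.Adj x y := by
  have ⟨_, _, _, _, hmatch, _, hcover, _⟩ := h
  have hMO : ∀ {y}, c.toSubgraph.Adj x y → M.Adj x y ∨ O.Adj x y := fun {y} hxy => by
    have he : s(x, y) ∈ c.edges := c.mem_edges_toSubgraph.mp hxy
    have hG' : s(x, y) ∈ G.edgeSet := c.edges_subset_edgeSet he
    rw [← hcover] at hG'
    rcases hG' with (hT | hM) | hO
    exacts [absurd hT (hcT _ he), Or.inl hM, Or.inr hO]
  refine (hMO hxy).resolve_left fun hM => ?_
  have h2 := hc.ncard_neighborSet_toSubgraph_eq_two (c.mem_verts_toSubgraph.mp hxy.fst_mem)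
  obtain ⟨z, hxz, hzy⟩ :=
    Set.exists_ne_of_one_lt_ncard (s := c.toSubgraph.neighborSet x) (by omega) y
  rcases hMO hxz with hMz | hOz
  · exact hzy (hmatch hM hMz).symm
  · exact h.not_matching_adj hG hOz hM

theorem mem_support_twoRegular_of_mem_support (h : IsGoodDecomposition G T M O) (hG : IsCubic G)
    (hc : c.IsCycle) (hcT : ∀ e ∈ c.edges, e ∉ T.edgeSet) (hx : x ∈ c.support) :
    x ∈ O.support :=
  have ⟨w, hxw⟩ := Set.nonempty_of_ncard_ne_zero (s := c.toSubgraph.neighborSet x)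
    (by rw [hc.ncard_neighborSet_toSubgraph_eq_two hx]; norm_num)
  ⟨w, h.twoRegular_adj_of_toSubgraph_adj hG hc hcT hxw⟩

theorem toSubgraph_adj_iff_twoRegular_adj (h : IsGoodDecomposition G T M O) (hG : IsCubic G)
    (hc : c.IsCycle) (hcT : ∀ e ∈ c.edges, e ∉ T.edgeSet) (hx : x ∈ c.support) (y : V) :
    c.toSubgraph.Adj x y ↔ O.Adj x y := by
  have h2 := hc.ncard_neighborSet_toSubgraph_eq_two hx
  have hsub : c.toSubgraph.neighborSet x ⊆ O.neighborSet x :=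
    fun _ => h.twoRegular_adj_of_toSubgraph_adj hG hc hcT
  have hO2 := h.ncard_neighborSet_eq_two (h.mem_support_twoRegular_of_mem_support hG hc hcT hx)
  exact Set.ext_iff.mp (Set.eq_of_subset_of_ncard_le hsub (by omega)
    (Set.finite_of_ncard_ne_zero (by omega))) y

end IsGoodDecomposition

theorem cycle_avoiding_tree_no_diamond_vertex_general (G T M O : SimpleGraph V)
    (hcubic : IsCubic G)
    (hgood : IsGoodDecomposition G T M O)
    {v : V} (c : G.Walk v v) (hc : c.IsCycle)
    (hT : ∀ e ∈ c.edges, e ∉ T.edgeSet)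
    (htri : c.length ≠ 3) :
    ∀ u ∈ c.support, ¬ ∃ s : Set V, IsDiamondSet G s ∧ u ∈ s := by
  rintro u hu ⟨s, hs, hus⟩
  have hadj {x : V} (hx : x ∈ c.support) :=
    hgood.toSubgraph_adj_iff_twoRegular_adj hcubic hc hT hx
  obtain ⟨q, r, huq, hqr, hru⟩ := hgood.exists_twoRegular_triangle_of_mem_diamond hcubic hs hus
    (hgood.mem_support_twoRegular_of_mem_support hcubic hc hT hu)
  have huq' := (hadj hu q).mpr huq
  have hqr' := (hadj (c.mem_verts_toSubgraph.mp huq'.snd_mem) r).mpr hqr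
  have hru' := (hadj (c.mem_verts_toSubgraph.mp hqr'.snd_mem) u).mpr hru
  exact htri (hc.length_eq_three_of_toSubgraph_adj huq' hqr' hru')

/-- Lemma 2(ii): in a connected claw-free cubic graph with a good decomposition `{T, M, O}`,
no vertex of a non-triangle cycle avoiding the spanning tree `T` lies in a diamond of `G`. -/
theorem cycle_avoiding_tree_no_diamond_vertex [Fintype V] (G T M O : SimpleGraph V)
    (hconn : G.Connected) (hclaw : IsClawFree G) (hcubic : IsCubic G)
    (hgood : IsGoodDecomposition G T M O)
    {v : V} (c : G.Walk v v) (hc : c.IsCycle)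
    (hT : ∀ e ∈ c.edges, e ∉ T.edgeSet)
    (htri : c.length ≠ 3) :
    ∀ u ∈ c.support, ¬ ∃ s : Set V, IsDiamondSet G s ∧ u ∈ s :=
  cycle_avoiding_tree_no_diamond_vertex_general G T M O hcubic hgood c hc hT htri
end

section
/- Let G be a connected claw-free cubic graph that has a good decomposition with spanning tree T, and let C be a cycle of G that uses no edge of T. If C is not a triangle, then C has an even number of vertices. -/
/-!
Let `C` avoid the spanning tree `T`. Each vertex of `C` has its two `C`-neighbours and, `G` being
cubic, exactly one `T`-neighbour. That `T`-neighbour lies off `C`: otherwise the `T`-edge between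
two vertices of `C` would be a whole component of `T`. If `|C| ≥ 4`, the two `C`-neighbours of a
vertex are non-adjacent, so claw-freeness forces its `T`-neighbour to be adjacent to, hence the
`T`-neighbour of, one of them. No vertex is the `T`-neighbour of three consecutive vertices of `C`,
since its star would then be a whole component of `T`. Hence the edges of `C` whose ends share
their `T`-neighbour form a perfect matching of `C`, and `C` has even length.
-/

open SimpleGraph

variable {V : Type*}

theorem even_of_forall_succ_iff_not {P : ℕ → Prop} {n : ℕ} (hper : P n ↔ P 0)
    (halt : ∀ i, P (i + 1) ↔ ¬ P i) : Even n := by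
  have key : ∀ i, P i ↔ (Even i ↔ P 0) := by
    intro i
    induction i with
    | zero => simp
    | succ i ih => rw [halt, ih, Nat.even_add_one]; tauto
  have := key n
  tauto

theorem SimpleGraph.Preconnected.mem_of_adj_closed {G : SimpleGraph V} (hG : G.Preconnected)
    {S : Set V} (hS : ∀ a ∈ S, ∀ b, G.Adj a b → b ∈ S) {x : V} (hx : x ∈ S) (y : V) :
    y ∈ S := by
  obtain ⟨w⟩ := hG x y
  induction w with
  | nil => exact hx
  | cons h _ ih => exact ih (hS _ hx _ h)

theorem IsCubic.neighborSet_eq {G : SimpleGraph V} (hG : IsCubic G) {x a b c : V}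
    (ha : G.Adj x a) (hb : G.Adj x b) (hc : G.Adj x c) (hab : a ≠ b) (hac : a ≠ c)
    (hbc : b ≠ c) : G.neighborSet x = {a, b, c} := by
  refine (Set.eq_of_subset_of_ncard_le ?_ ?_ (Set.finite_of_ncard_ne_zero ?_)).symm
  · rintro _ (rfl | rfl | rfl) <;> assumption
  · rw [hG x, Set.ncard_eq_three.mpr ⟨a, b, c, hab, hac, hbc, rfl⟩]
  · simp [hG x]

theorem IsClawFree.adj_or_adj {G : SimpleGraph V} (hG : IsClawFree G) {x a b c : V}
    (ha : G.Adj x a) (hb : G.Adj x b) (hc : G.Adj x c) (hab : a ≠ b) (hac : a ≠ c)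
    (hbc : b ≠ c) (hnab : ¬ G.Adj a b) : G.Adj a c ∨ G.Adj b c := by
  by_contra! h
  exact hG ⟨x, a, b, c, ha, hb, hc, hab, hac, hbc, hnab, h.1, h.2⟩

namespace SimpleGraph.Walk

variable {G : SimpleGraph V} {v : V}

def cycleVert (c : G.Walk v v) (i : ℕ) : V := c.getVert (i % c.length)

theorem cycleVert_periodic (c : G.Walk v v) : Function.Periodic c.cycleVert c.length := by
  intro i
  simp [cycleVert]

theorem cycleVert_succ (c : G.Walk v v) (i : ℕ) :
    c.cycleVert (i + 1) = c.getVert (i % c.length + 1) := by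
  rcases Nat.eq_zero_or_pos c.length with h0 | hpos
  · simp [cycleVert, h0]
  have hi := Nat.mod_lt i hpos
  rw [cycleVert, ← Nat.mod_add_mod]
  rcases Nat.lt_or_ge (i % c.length + 1) c.length with h | h
  · rw [Nat.mod_eq_of_lt h]
  · rw [show i % c.length + 1 = c.length by omega, Nat.mod_self, getVert_zero, getVert_length]

theorem cycleVert_mem_edges (c : G.Walk v v) (hc : 0 < c.length) (i : ℕ) :
    s(c.cycleVert i, c.cycleVert (i + 1)) ∈ c.edges := by
  rw [cycleVert_succ, mk_mem_edges_iff_exists]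
  exact ⟨i % c.length, Nat.mod_lt _ hc, rfl⟩

theorem cycleVert_pred_mem_edges (c : G.Walk v v) (hc : 0 < c.length) (i : ℕ) :
    s(c.cycleVert (i + (c.length - 1)), c.cycleVert i) ∈ c.edges := by
  simpa [add_assoc, Nat.sub_add_cancel hc, c.cycleVert_periodic i] using
    c.cycleVert_mem_edges hc (i + (c.length - 1))

theorem IsCycle.cycleVert_ne {c : G.Walk v v} (hc : c.IsCycle) {i j : ℕ} (hij : i < j)
    (hji : j < i + c.length) : c.cycleVert i ≠ c.cycleVert j := by
  intro h
  have hpos : 0 < c.length := by have := hc.three_le_length; omega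
  have hmod : i % c.length = j % c.length :=
    hc.getVert_injOn' (by have := Nat.mod_lt i hpos; simp; omega)
      (by have := Nat.mod_lt j hpos; simp; omega) h
  have hk : (j - i) % c.length = 0 % c.length :=
    Nat.ModEq.add_left_cancel' i (by rw [Nat.add_sub_cancel' hij.le, add_zero]; exact hmod.symm)
  rw [Nat.mod_eq_of_lt (by omega), Nat.zero_mod] at hk
  omega

end SimpleGraph.Walk

section TreeAvoidingCycle

variable {G T : SimpleGraph V} {v : V} {c : G.Walk v v}

theorem neighborSet_cycleVert_eq (hcubic : IsCubic G) (hTG : T ≤ G) (hc : c.IsCycle)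
    (hT : ∀ e ∈ c.edges, e ∉ T.edgeSet) (i : ℕ) {y : V} (hy : T.Adj (c.cycleVert i) y) :
    G.neighborSet (c.cycleVert i) =
      {c.cycleVert (i + (c.length - 1)), c.cycleVert (i + 1), y} := by
  have hlen := hc.three_le_length
  have hpred := c.cycleVert_pred_mem_edges (by omega) i
  have hsucc := c.cycleVert_mem_edges (by omega) i
  refine hcubic.neighborSet_eq (c.adj_of_mem_edges hpred).symm (c.adj_of_mem_edges hsucc)
    (hTG hy) (hc.cycleVert_ne (by omega) (by omega)).symm ?_ ?_
  · rintro rfl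
    exact hT _ hpred hy.symm
  · rintro rfl
    exact hT _ hsucc hy

theorem eq_of_tree_adj_cycleVert (hcubic : IsCubic G) (hTG : T ≤ G) (hc : c.IsCycle)
    (hT : ∀ e ∈ c.edges, e ∉ T.edgeSet) {i : ℕ} {y z : V} (hy : T.Adj (c.cycleVert i) y)
    (hz : T.Adj (c.cycleVert i) z) : z = y := by
  have hlen := hc.three_le_length
  have hzG : z ∈ G.neighborSet (c.cycleVert i) := hTG hz
  rw [neighborSet_cycleVert_eq hcubic hTG hc hT i hy] at hzG
  rcases hzG with rfl | rfl | rfl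
  · exact absurd hz.symm (hT _ (c.cycleVert_pred_mem_edges (by omega) i))
  · exact absurd hz (hT _ (c.cycleVert_mem_edges (by omega) i))
  · rfl

theorem exists_tree_adj_cycleVert (hTconn : T.Preconnected) (hc : c.IsCycle) (i : ℕ) :
    ∃ y, T.Adj (c.cycleVert i) y := by
  have hlen := hc.three_le_length
  have := nontrivial_of_ne _ _ (hc.cycleVert_ne (i := i) (j := i + 1) (by omega) (by omega))
  exact hTconn.exists_adj_of_nontrivial _

theorem tree_adj_cycleVert_ne (hTconn : T.Preconnected) (hcubic : IsCubic G) (hTG : T ≤ G)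
    (hc : c.IsCycle) (hT : ∀ e ∈ c.edges, e ∉ T.edgeSet) {i : ℕ} {y : V}
    (hy : T.Adj (c.cycleVert i) y) (j : ℕ) : y ≠ c.cycleVert j := by
  rintro rfl
  have hlen := hc.three_le_length
  have hS : ∀ a ∈ ({c.cycleVert i, c.cycleVert j} : Set V), ∀ b, T.Adj a b →
      b ∈ ({c.cycleVert i, c.cycleVert j} : Set V) := by
    rintro a (rfl | rfl) b hb
    · exact Or.inr (eq_of_tree_adj_cycleVert hcubic hTG hc hT hy hb)
    · exact Or.inl (eq_of_tree_adj_cycleVert hcubic hTG hc hT hy.symm hb)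
  rcases hTconn.mem_of_adj_closed hS (Set.mem_insert _ _) (c.cycleVert (i + 1)) with h | h
  · exact hc.cycleVert_ne (by omega) (by omega) h.symm
  · exact hT _ (c.cycleVert_mem_edges (by omega) i) (h ▸ hy)

theorem tree_adj_of_adj_cycleVert (hTconn : T.Preconnected) (hcubic : IsCubic G) (hTG : T ≤ G)
    (hc : c.IsCycle) (hT : ∀ e ∈ c.edges, e ∉ T.edgeSet) {i : ℕ} {z : V}
    (hz : G.Adj (c.cycleVert i) z) (hzc : ∀ j, z ≠ c.cycleVert j) :
    T.Adj (c.cycleVert i) z := by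
  obtain ⟨y, hy⟩ := exists_tree_adj_cycleVert hTconn hc i
  have hzG : z ∈ G.neighborSet (c.cycleVert i) := hz
  rw [neighborSet_cycleVert_eq hcubic hTG hc hT i hy] at hzG
  rcases hzG with rfl | rfl | rfl
  · exact absurd rfl (hzc _)
  · exact absurd rfl (hzc _)
  · exact hy

theorem not_adj_cycleVert_add_two (hTconn : T.Preconnected) (hcubic : IsCubic G) (hTG : T ≤ G)
    (hc : c.IsCycle) (hT : ∀ e ∈ c.edges, e ∉ T.edgeSet) (hlen : 4 ≤ c.length) (i : ℕ) :
    ¬ G.Adj (c.cycleVert i) (c.cycleVert (i + 2)) := by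
  intro h
  obtain ⟨y, hy⟩ := exists_tree_adj_cycleVert hTconn hc i
  have hG : c.cycleVert (i + 2) ∈ G.neighborSet (c.cycleVert i) := h
  rw [neighborSet_cycleVert_eq hcubic hTG hc hT i hy] at hG
  rcases hG with h | h | h
  · exact hc.cycleVert_ne (by omega) (by omega) h
  · exact hc.cycleVert_ne (by omega) (by omega) h.symm
  · exact tree_adj_cycleVert_ne hTconn hcubic hTG hc hT hy _ h.symm

theorem not_tree_adj_three_consecutive (hTconn : T.Preconnected) (hcubic : IsCubic G)
    (hTG : T ≤ G) (hc : c.IsCycle) (hT : ∀ e ∈ c.edges, e ∉ T.edgeSet)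
    (hlen : 4 ≤ c.length) {i : ℕ} {y : V} (h₀ : T.Adj (c.cycleVert i) y)
    (h₁ : T.Adj (c.cycleVert (i + 1)) y) (h₂ : T.Adj (c.cycleVert (i + 2)) y) : False := by
  have hy : G.neighborSet y = {c.cycleVert i, c.cycleVert (i + 1), c.cycleVert (i + 2)} :=
    hcubic.neighborSet_eq (hTG h₀.symm) (hTG h₁.symm) (hTG h₂.symm)
      (hc.cycleVert_ne (by omega) (by omega)) (hc.cycleVert_ne (by omega) (by omega))
      (hc.cycleVert_ne (by omega) (by omega))
  set S : Set V := {y, c.cycleVert i, c.cycleVert (i + 1), c.cycleVert (i + 2)}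
  have hS : ∀ a ∈ S, ∀ b, T.Adj a b → b ∈ S := by
    rintro a (rfl | rfl | rfl | rfl) b hb
    · exact Or.inr (hy ▸ hTG hb)
    · exact Or.inl (eq_of_tree_adj_cycleVert hcubic hTG hc hT h₀ hb)
    · exact Or.inl (eq_of_tree_adj_cycleVert hcubic hTG hc hT h₁ hb)
    · exact Or.inl (eq_of_tree_adj_cycleVert hcubic hTG hc hT h₂ hb)
  rcases hTconn.mem_of_adj_closed hS (Set.mem_insert _ _) (c.cycleVert (i + 3)) with h | h | h | h
  · exact tree_adj_cycleVert_ne hTconn hcubic hTG hc hT h₀ _ h.symm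
  all_goals exact hc.cycleVert_ne (by omega) (by omega) h.symm

theorem tree_adj_or_tree_adj_of_isClawFree (hclaw : IsClawFree G) (hTconn : T.Preconnected)
    (hcubic : IsCubic G) (hTG : T ≤ G) (hc : c.IsCycle) (hT : ∀ e ∈ c.edges, e ∉ T.edgeSet)
    (hlen : 4 ≤ c.length) {i : ℕ} {y : V} (hy : T.Adj (c.cycleVert (i + 1)) y) :
    T.Adj (c.cycleVert i) y ∨ T.Adj (c.cycleVert (i + 2)) y := by
  have hoff := tree_adj_cycleVert_ne hTconn hcubic hTG hc hT hy
  have hpred := c.adj_of_mem_edges (c.cycleVert_mem_edges (by omega) i)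
  have hsucc := c.adj_of_mem_edges (c.cycleVert_mem_edges (by omega) (i + 1))
  have hnot := not_adj_cycleVert_add_two hTconn hcubic hTG hc hT hlen i
  exact (hclaw.adj_or_adj hpred.symm hsucc (hTG hy) (hc.cycleVert_ne (by omega) (by omega))
    (hoff _).symm (hoff _).symm hnot).imp
    (fun h => tree_adj_of_adj_cycleVert hTconn hcubic hTG hc hT h hoff)
    (fun h => tree_adj_of_adj_cycleVert hTconn hcubic hTG hc hT h hoff)

end TreeAvoidingCycle

theorem cycle_avoiding_tree_even_general (G T M O : SimpleGraph V)
    (hclaw : IsClawFree G) (hcubic : IsCubic G)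
    (hgood : IsGoodDecomposition G T M O)
    {v : V} (c : G.Walk v v) (hc : c.IsCycle)
    (hT : ∀ e ∈ c.edges, e ∉ T.edgeSet)
    (htri : c.length ≠ 3) :
    Even c.length := by
  obtain ⟨hTG, -, -, hTree, -⟩ := hgood
  have hTconn := hTree.connected.preconnected
  have hlen : 4 ≤ c.length := by have := hc.three_le_length; omega
  set P : ℕ → Prop := fun i => ∃ y, T.Adj (c.cycleVert i) y ∧ T.Adj (c.cycleVert (i + 1)) y
  refine even_of_forall_succ_iff_not (P := P) ?_ fun i => ⟨?_, ?_⟩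
  · simp only [P, c.cycleVert_periodic.eq, add_comm c.length 1, c.cycleVert_periodic 1, zero_add]
  · rintro ⟨y, h₁, h₂⟩ ⟨z, h₀, h₁'⟩
    obtain rfl := eq_of_tree_adj_cycleVert hcubic hTG hc hT h₁' h₁
    exact not_tree_adj_three_consecutive hTconn hcubic hTG hc hT hlen h₀ h₁ h₂
  · intro hnot
    obtain ⟨y, hy⟩ := exists_tree_adj_cycleVert hTconn hc (i + 1)
    rcases tree_adj_or_tree_adj_of_isClawFree hclaw hTconn hcubic hTG hc hT hlen hy with h | h
    · exact absurd ⟨y, h, hy⟩ hnot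
    · exact ⟨y, hy, h⟩

/-- Lemma 2(iii): in a connected claw-free cubic graph with a good decomposition `{T, M, O}`,
every non-triangle cycle avoiding the spanning tree `T` is an even cycle. -/
theorem cycle_avoiding_tree_even [Fintype V] (G T M O : SimpleGraph V)
    (hconn : G.Connected) (hclaw : IsClawFree G) (hcubic : IsCubic G)
    (hgood : IsGoodDecomposition G T M O)
    {v : V} (c : G.Walk v v) (hc : c.IsCycle)
    (hT : ∀ e ∈ c.edges, e ∉ T.edgeSet)
    (htri : c.length ≠ 3) :
    Even c.length :=
  cycle_avoiding_tree_even_general G T M O hclaw hcubic hgood c hc hT htri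
end

section
/- For every integer k ≥ 2, the diamond-necklace N_k with k diamonds admits a good decomposition of its edge set into the edge set of a spanning tree, a matching (possibly empty), and the edge set of a 2-regular subgraph. -/
open SimpleGraph

variable {V : Type*}

/-- The diamond-necklace `N_k`: vertex `(i, 0)` is `a_i`, `(i, 1)` is `b_i`, `(i, 2)` is `c_i`
and `(i, 3)` is `d_i`.  Inside the `i`-th diamond all pairs are adjacent except `a_i d_i`,
and the diamonds are joined cyclically by the edges `d_i a_{i+1}` (indices mod `k`). -/
def diamondNecklace (k : ℕ) : SimpleGraph (Fin k × Fin 4) :=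
  SimpleGraph.fromRel (fun p q =>
    (p.1 = q.1 ∧ ¬ ((p.2 = 0 ∧ q.2 = 3) ∨ (p.2 = 3 ∧ q.2 = 0))) ∨
    ((q.1 : ℕ) = ((p.1 : ℕ) + 1) % k ∧ p.2 = 3 ∧ q.2 = 0))

/-!
The tree `T` is rooted at `a_0`: every `d_i` hangs from `a_{i+1}`, inside diamond `i ≠ 0` the path
`a_i b_i c_i d_i` leads to `d_i`, and `b_0`, `c_0` hang from `d_0`. The remaining edges are the
chords `a_i c_i`, `b_i d_i` for `i ≠ 0`, a matching, and the triangle `a_0 b_0 c_0`. A graph in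
which every vertex but the root is joined exactly to its parent, with a depth function decreasing
towards the root, is connected and has one edge fewer than vertices, hence is a tree.
-/

lemma isGoodDecomposition_of_sup_eq {G T M O : SimpleGraph V} (hG : T ⊔ M ⊔ O = G)
    (hT : T.IsTree) (hM : IsMatchingGraph M) (hO : IsTwoRegularGraph O)
    (hTM : Disjoint T M) (hTO : Disjoint T O) (hMO : Disjoint M O) :
    IsGoodDecomposition G T M O := by
  subst hG
  exact ⟨le_sup_left.trans le_sup_left, le_sup_right.trans le_sup_left, le_sup_right, hT, hM, hO,
    by simp only [edgeSet_sup], disjoint_edgeSet.2 hTM, disjoint_edgeSet.2 hTO,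
    disjoint_edgeSet.2 hMO⟩

lemma isMatchingGraph_fromRel_of_involutive {σ : V → V} (hσ : Function.Involutive σ) :
    IsMatchingGraph (fromRel fun v w => w = σ v) := by
  have hadj : ∀ {v w}, (fromRel fun v w => w = σ v).Adj v w → w = σ v := by
    rintro v w ⟨-, h | rfl⟩
    exacts [h, (hσ w).symm]
  exact fun v w w' hw hw' => (hadj hw).trans (hadj hw').symm

lemma isTwoRegularGraph_fromEdgeSet_sym2 {S : Set V} (hS : S.ncard = 3) :
    IsTwoRegularGraph (fromEdgeSet S.sym2) := by
  have hnbr : ∀ v ∈ S, (fromEdgeSet S.sym2).neighborSet v = S \ {v} := by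
    intro v hv
    ext w
    simp [hv, eq_comm]
  obtain ⟨u, w, z, huw, -, -, hSuwz⟩ := Set.ncard_eq_three.1 hS
  refine ⟨⟨s(u, w), by simp [hSuwz, huw]⟩, fun v hv => ?_⟩
  obtain ⟨x, hx⟩ := (mem_support _).1 hv
  have hvS : v ∈ S := (Set.mk_mem_sym2_iff.1 ((fromEdgeSet_adj _).1 hx).1).1
  rw [hnbr v hvS, Set.ncard_sdiff_singleton_of_mem hvS, hS]

section ParentGraph

def parentGraph (r : V) (f : V → V) : SimpleGraph V :=
  fromRel fun v w => v ≠ r ∧ w = f v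

variable {r : V} {f : V → V} {d : V → ℕ}

lemma parentGraph_adj_parent (hd : ∀ v ≠ r, d (f v) < d v) {v : V} (hv : v ≠ r) :
    (parentGraph r f).Adj v (f v) :=
  ⟨fun h => (hd v hv).ne (congrArg d h).symm, .inl ⟨hv, rfl⟩⟩

lemma parentGraph_reachable (hd : ∀ v ≠ r, d (f v) < d v) (v : V) :
    (parentGraph r f).Reachable v r := by
  induction v using (measure d).wf.induction with
  | _ v ih =>
    by_cases hv : v = r
    · exact hv ▸ .rfl
    · exact (parentGraph_adj_parent hd hv).reachable.trans (ih _ (hd v hv))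

lemma parentGraph_connected (hd : ∀ v ≠ r, d (f v) < d v) : (parentGraph r f).Connected :=
  have : Nonempty V := ⟨r⟩
  (connected_iff _).2
    ⟨fun v w => (parentGraph_reachable hd v).trans (parentGraph_reachable hd w).symm, ‹_›⟩

lemma card_edgeSet_parentGraph (hd : ∀ v ≠ r, d (f v) < d v) :
    Nat.card (parentGraph r f).edgeSet = Nat.card {v // v ≠ r} := by
  let e : {v // v ≠ r} → (parentGraph r f).edgeSet := fun v =>
    ⟨s(v, f v), parentGraph_adj_parent hd v.2⟩
  refine (Nat.card_congr (Equiv.ofBijective e ⟨?_, ?_⟩)).symm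
  · rintro ⟨v, hv⟩ ⟨w, hw⟩ h
    replace h := congrArg Subtype.val h
    simp only [e, Sym2.eq_iff] at h
    rcases h with ⟨h, -⟩ | ⟨hvw, hwv⟩
    · exact Subtype.ext h
    · have hv' := hd v hv
      have hw' := hd w hw
      rw [hwv] at hv'
      rw [← hvw] at hw'
      omega
  · rintro ⟨e', he'⟩
    induction e' using Sym2.ind with
    | _ v w =>
      rw [mem_edgeSet, parentGraph, fromRel_adj] at he'
      rcases he' with ⟨-, ⟨hv, rfl⟩ | ⟨hw, rfl⟩⟩
      · exact ⟨⟨v, hv⟩, rfl⟩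
      · exact ⟨⟨w, hw⟩, Subtype.ext Sym2.eq_swap⟩

lemma parentGraph_isTree [Finite V] (hd : ∀ v ≠ r, d (f v) < d v) :
    (parentGraph r f).IsTree := by
  refine isTree_iff_connected_and_card.2 ⟨parentGraph_connected hd, ?_⟩
  rw [card_edgeSet_parentGraph hd, ← Set.ncard_univ V,
    ← Set.ncard_sdiff_singleton_add_one (Set.mem_univ r), ← Nat.card_coe_set_eq]
  exact congrArg (· + 1) (Nat.card_congr (Equiv.subtypeEquivRight (by simp)))

end ParentGraph

lemma Nat.eq_add_one_mod_iff {i j k : ℕ} (hi : i < k) :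
    j = (i + 1) % k ↔ (i + 1 < k ∧ j = i + 1) ∨ (i + 1 = k ∧ j = 0) := by
  rcases Nat.lt_or_ge (i + 1) k with h | h
  · rw [Nat.mod_eq_of_lt h]; omega
  · obtain rfl : i + 1 = k := by omega
    rw [Nat.mod_self]; omega

namespace DiamondNecklace

variable {k : ℕ} [NeZero k]

def parent (v : Fin k × Fin 4) : Fin k × Fin 4 :=
  if v.2 = 3 then (⟨(v.1 + 1) % k, Nat.mod_lt _ v.1.pos⟩, 0)
  else (v.1, if v.1 = 0 then 3 else v.2 + 1)

def depth (v : Fin k × Fin 4) : ℕ :=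
  if v = (0, 0) then 0 else 4 * (k - v.1) - v.2

lemma depth_parent_lt {v : Fin k × Fin 4} (hv : v ≠ (0, 0)) : depth (parent v) < depth v := by
  obtain ⟨⟨i, hi⟩, x⟩ := v
  have hmod := (Nat.eq_add_one_mod_iff (j := (i + 1) % k) hi).1 rfl
  fin_cases x <;> by_cases hi0 : i = 0 <;>
    simp [parent, depth, Prod.ext_iff, hi0] at hv hmod ⊢ <;> (try split_ifs) <;> omega

-- `x ↦ x + 2` swaps `a_i ↔ c_i` and `b_i ↔ d_i`.
def partner (v : Fin k × Fin 4) : Fin k × Fin 4 :=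
  (v.1, if v.1 = 0 then v.2 else v.2 + 2)

lemma partner_involutive : Function.Involutive (partner (k := k)) := by
  rintro ⟨i, x⟩
  fin_cases x <;> by_cases hi : i = 0 <;> simp [partner, hi]

variable (k)

def tree : SimpleGraph (Fin k × Fin 4) := parentGraph (0, 0) parent

def matching : SimpleGraph (Fin k × Fin 4) := fromRel fun v w => w = partner v

def triangle : SimpleGraph (Fin k × Fin 4) := fromEdgeSet ({(0, 0), (0, 1), (0, 2)} : Set _).sym2

lemma tree_isTree : (tree k).IsTree := parentGraph_isTree (d := depth) fun _ => depth_parent_lt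

lemma matching_isMatchingGraph : IsMatchingGraph (matching k) :=
  isMatchingGraph_fromRel_of_involutive partner_involutive

lemma triangle_isTwoRegularGraph : IsTwoRegularGraph (triangle k) :=
  isTwoRegularGraph_fromEdgeSet_sym2 <|
    Set.ncard_eq_three.2 ⟨_, _, _, by simp, by simp, by simp, rfl⟩

lemma tree_sup_matching_sup_triangle :
    tree k ⊔ matching k ⊔ triangle k = diamondNecklace k := by
  ext ⟨⟨i, hi⟩, x⟩ ⟨⟨j, hj⟩, y⟩
  fin_cases x <;> fin_cases y <;>
    simp [tree, matching, triangle, diamondNecklace, parentGraph, parent, partner, Prod.ext_iff,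
      Nat.eq_add_one_mod_iff hi, Nat.eq_add_one_mod_iff hj] <;> (try split_ifs) <;> omega

lemma disjoint_tree_matching : Disjoint (tree k) (matching k) := by
  refine disjoint_left.2 ?_
  rintro ⟨⟨i, hi⟩, x⟩ ⟨⟨j, hj⟩, y⟩
  fin_cases x <;> fin_cases y <;>
    simp [tree, matching, parentGraph, parent, partner, Prod.ext_iff] <;> (try split_ifs) <;> omega

lemma disjoint_tree_triangle : Disjoint (tree k) (triangle k) := by
  refine disjoint_left.2 ?_
  rintro ⟨⟨i, hi⟩, x⟩ ⟨⟨j, hj⟩, y⟩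
  fin_cases x <;> fin_cases y <;>
    simp [tree, triangle, parentGraph, parent, Prod.ext_iff, Nat.eq_add_one_mod_iff hi] <;>
    (try split_ifs) <;> omega

lemma disjoint_matching_triangle : Disjoint (matching k) (triangle k) := by
  refine disjoint_left.2 ?_
  rintro ⟨⟨i, hi⟩, x⟩ ⟨⟨j, hj⟩, y⟩
  fin_cases x <;> fin_cases y <;>
    simp [matching, triangle, partner, Prod.ext_iff] <;> (try split_ifs) <;> omega

end DiamondNecklace

/-- For every `k ≥ 2`, the diamond-necklace `N_k` has a good decomposition. -/
theorem diamondNecklace_good (k : ℕ) (hk : 2 ≤ k) :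
    ∃ T M O : SimpleGraph (Fin k × Fin 4), IsGoodDecomposition (diamondNecklace k) T M O := by
  have : NeZero k := ⟨by omega⟩
  open DiamondNecklace in
  exact ⟨tree k, matching k, triangle k,
    isGoodDecomposition_of_sup_eq (tree_sup_matching_sup_triangle k) (tree_isTree k)
      (matching_isMatchingGraph k) (triangle_isTwoRegularGraph k) (disjoint_tree_matching k)
      (disjoint_tree_triangle k) (disjoint_matching_triangle k)⟩
end

section
/- Let G be a claw-free cubic graph containing a triangle v_1 v_2 v_3, and let u_1 and u_2 be the neighbours of v_1 and v_2 respectively outside the triangle. If u_1 and u_2 are adjacent, then u_1 and u_2 have a common neighbour u_3 with u_3 ∉ {v_1, v_2, v_3}. -/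
open SimpleGraph

variable {V : Type*}

lemma cubic_mem3 [Finite V] {G : SimpleGraph V} (hc : IsCubic G) {v a b c d : V}
    (ha : G.Adj v a) (hb : G.Adj v b) (hcc : G.Adj v c)
    (hab : a ≠ b) (hac : a ≠ c) (hbc : b ≠ c) (hd : G.Adj v d) :
    d = a ∨ d = b ∨ d = c := by
  have hsub : ({a, b, c} : Set V) ⊆ G.neighborSet v := by
    intro x hx
    rcases hx with rfl | rfl | rfl <;> assumption
  have hcard : ({a, b, c} : Set V).ncard = 3 := by
    rw [Set.ncard_insert_of_notMem (by simp [hab, hac]) (Set.toFinite _),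
        Set.ncard_insert_of_notMem (by simp [hbc]) (Set.toFinite _), Set.ncard_singleton]
  have heq : ({a, b, c} : Set V) = G.neighborSet v :=
    Set.eq_of_subset_of_ncard_le hsub (by rw [hc v, hcard]) (Set.toFinite _)
  have : d ∈ ({a, b, c} : Set V) := heq ▸ hd
  simpa using this

lemma cubic_third [Finite V] {G : SimpleGraph V} (hc : IsCubic G) {v a b : V}
    (ha : G.Adj v a) (hb : G.Adj v b) (hab : a ≠ b) :
    ∃ w, G.Adj v w ∧ w ≠ a ∧ w ≠ b := by
  by_contra h
  push_neg at h
  have hsub : G.neighborSet v ⊆ {a, b} := by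
    intro x hx
    by_cases hxa : x = a
    · exact hxa ▸ Set.mem_insert _ _
    · simp [h x hx hxa]
  have := Set.ncard_le_ncard hsub (Set.toFinite _)
  rw [hc v] at this
  have h2 := Set.ncard_insert_le a ({b} : Set V)
  simp [Set.ncard_singleton] at h2
  omega

/-- Let `G` be a claw-free cubic graph with a triangle `v₁v₂v₃`, and let `u₁, u₂` be the
neighbours of `v₁, v₂` respectively outside the triangle.  If `u₁` and `u₂` are adjacent,
then they have a common neighbour `u₃` outside the triangle. -/
theorem common_neighbour_outside_triangle [Fintype V] (G : SimpleGraph V)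
    (hclaw : IsClawFree G) (hcubic : IsCubic G)
    {v₁ v₂ v₃ u₁ u₂ : V}
    (h12 : G.Adj v₁ v₂) (h13 : G.Adj v₁ v₃) (h23 : G.Adj v₂ v₃)
    (hu₁ : G.Adj v₁ u₁) (hu₁2 : u₁ ≠ v₂) (hu₁3 : u₁ ≠ v₃)
    (hu₂ : G.Adj v₂ u₂) (hu₂1 : u₂ ≠ v₁) (hu₂3 : u₂ ≠ v₃)
    (hadj : G.Adj u₁ u₂) :
    ∃ u₃ : V, G.Adj u₁ u₃ ∧ G.Adj u₂ u₃ ∧ u₃ ≠ v₁ ∧ u₃ ≠ v₂ ∧ u₃ ≠ v₃ := by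
  have hu12 : u₁ ≠ u₂ := hadj.ne
  -- v₁ is not adjacent to u₂
  have hnv1u2 : ¬ G.Adj v₁ u₂ := fun h => by
    rcases cubic_mem3 hcubic h12 h13 hu₁ h23.ne hu₁2.symm hu₁3.symm h with rfl | rfl | rfl
    · exact hu₂.ne rfl
    · exact hu₂3 rfl
    · exact hu12 rfl
  -- v₂ is not adjacent to u₁
  have hnv2u1 : ¬ G.Adj v₂ u₁ := fun h => by
    rcases cubic_mem3 hcubic h12.symm h23 hu₂ h13.ne hu₂1.symm hu₂3.symm h with rfl | rfl | rfl
    · exact hu₁.ne rfl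
    · exact hu₁3 rfl
    · exact hu12 rfl
  -- if v₃ were adjacent to both u₁ and u₂, v₃ would have degree ≥ 4
  have hv3 : ¬ (G.Adj v₃ u₁ ∧ G.Adj v₃ u₂) := fun ⟨h1, h2⟩ => by
    rcases cubic_mem3 hcubic h13.symm h23.symm h1 h12.ne hu₁.ne hu₁2.symm h2
      with rfl | rfl | rfl
    · exact hu₂1 rfl
    · exact hu₂.ne rfl
    · exact hu12 rfl
  -- third neighbour of u₁
  obtain ⟨w, hw, hwv1, hwu2⟩ := cubic_third hcubic hu₁.symm hadj hu₂1.symm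
  by_cases hcase : G.Adj u₂ w
  · refine ⟨w, hw, hcase, hwv1, ?_, ?_⟩
    · rintro rfl; exact hnv2u1 hw.symm
    · rintro rfl; exact hv3 ⟨hw.symm, hcase.symm⟩
  · -- claw-freeness forces Adj v₁ w, hence w = v₃
    have hv1w : G.Adj v₁ w := by
      by_contra h
      exact hclaw ⟨u₁, v₁, u₂, w, hu₁.symm, hadj, hw, hu₂1.symm, fun e => hwv1 e.symm,
        fun e => hwu2 e.symm, hnv1u2, h, fun e => hcase e⟩
    have hwv3 : w = v₃ := by
      rcases cubic_mem3 hcubic h12 h13 hu₁ h23.ne hu₁2.symm hu₁3.symm hv1w with rfl | rfl | rfl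
      · exact absurd hw.symm hnv2u1
      · rfl
      · exact absurd rfl hw.ne
    subst hwv3
    -- third neighbour of u₂
    obtain ⟨y, hy, hyv2, hyu1⟩ := cubic_third hcubic hu₂.symm hadj.symm hu₁2.symm
    have hynv1 : y ≠ v₁ := fun e => hnv1u2 (e ▸ hy).symm
    have hynw : y ≠ w := fun e => hv3 ⟨hw.symm, (e ▸ hy).symm⟩
    exfalso
    by_cases hc2 : G.Adj u₁ y
    · rcases cubic_mem3 hcubic hu₁.symm hadj hw hu₂1.symm hwv1.symm hwu2.symm hc2
        with rfl | rfl | rfl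
      · exact hynv1 rfl
      · exact hy.ne rfl
      · exact hynw rfl
    · have hv2y : G.Adj v₂ y := by
        by_contra h
        exact hclaw ⟨u₂, v₂, u₁, y, hu₂.symm, hadj.symm, hy, hu₁2.symm,
          fun e => hyv2 e.symm, fun e => hyu1 e.symm, hnv2u1, h, hc2⟩
      rcases cubic_mem3 hcubic h12.symm h23 hu₂ h13.ne hu₂1.symm hu₂3.symm hv2y
        with rfl | rfl | rfl
      · exact hynv1 rfl
      · exact hynw rfl
      · exact hy.ne rfl
end
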